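/- arXiv:math/0210293 — 4 statements merged into one kernel-verified Lean document; each statement's English description precedes it below -/
import Mathlib

section
/- Fix 1 < p < ∞ and q = p/(p−1), let Y ⊂ ℝ^n be a bounded open set of finite positive measure, let ξ ∈ ℝ^n and c > 0. Let V ∈ L^p(Y; ℝ^n) and let A : Y → ℝ^n be measurable such that, for a.e. x ∈ Y: |ξ + V(x)|^p ≤ c (1 + (A(x), ξ + V(x))) and |A(x)| ≤ c (1 + |ξ + V(x)|^{p−1}), and suppose the orthogonality relation ∫_Y (A(x), V(x)) dx = 0 holds. Then there exists a constant C > 0, depending only on c, p, |Y| and |ξ|, such that ∫_Y |ξ + V(x)|^p dx ≤ C. -/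
open MeasureTheory
open scoped RealInnerProductSpace

private lemma young_aux {p ε a : ℝ} (hp : 1 < p) (hε : 0 < ε) (ha : 0 ≤ a) :
    a ^ (p - 1) ≤ ε * a ^ p + ε ^ (1 - p) := by
  have hεp : (0:ℝ) ≤ ε ^ (1 - p) := Real.rpow_nonneg hε.le _
  rcases le_or_gt a ε⁻¹ with h | h
  · have h1 : a ^ (p - 1) ≤ (ε⁻¹) ^ (p - 1) :=
      Real.rpow_le_rpow ha h (by linarith)
    have h2 : (ε⁻¹ : ℝ) ^ (p - 1) = ε ^ (1 - p) := by
      rw [Real.inv_rpow hε.le, ← Real.rpow_neg hε.le, show -(p-1) = 1 - p by ring]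
    have h3 : 0 ≤ ε * a ^ p := mul_nonneg hε.le (Real.rpow_nonneg ha _)
    nlinarith [h1, h2.le]
  · have ha0 : 0 < a := lt_trans (inv_pos.mpr hε) h
    have key : a ^ p = a ^ (p - 1) * a := by
      calc a ^ p = a ^ (p - 1 + 1) := by congr 1; ring
        _ = a ^ (p - 1) * a := by rw [Real.rpow_add ha0, Real.rpow_one]
    have hεa : 1 ≤ ε * a := by
      have h2 := mul_lt_mul_of_pos_left h hε
      rw [mul_inv_cancel₀ hε.ne'] at h2
      linarith
    have hpow : 0 ≤ a ^ (p - 1) := Real.rpow_nonneg ha0.le _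
    have : a ^ (p - 1) ≤ ε * a ^ p := by
      rw [key]
      calc a ^ (p - 1) = 1 * a ^ (p - 1) := (one_mul _).symm
        _ ≤ (ε * a) * a ^ (p - 1) := by nlinarith
        _ = ε * (a ^ (p - 1) * a) := by ring
    linarith

/-- A priori energy bound: if `V ∈ L^p(Y;ℝⁿ)`, `A : Y → ℝⁿ` is
measurable, `|ξ + V|^p ≤ c (1 + (A, ξ + V))` and `|A| ≤ c (1 + |ξ + V|^{p−1})` a.e.,
and `∫_Y (A, V) dx = 0`, then `∫_Y |ξ + V|^p dx ≤ C` with `C` depending only on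
`c, p, |Y|, |ξ|`. -/
theorem energy_bound_of_orthogonality
    {n : ℕ} (p q : ℝ) (hp : 1 < p) (hq : q = p / (p - 1))
    (Y : Set (EuclideanSpace ℝ (Fin n))) (hYopen : IsOpen Y)
    (hYbdd : Bornology.IsBounded Y) (hYpos : 0 < volume Y)
    (ξ : EuclideanSpace ℝ (Fin n)) (c : ℝ) (hc : 0 < c) :
    ∃ C : ℝ, 0 < C ∧
      ∀ (V A : EuclideanSpace ℝ (Fin n) → EuclideanSpace ℝ (Fin n)),
        MemLp V (ENNReal.ofReal p) (volume.restrict Y) →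
        AEStronglyMeasurable A (volume.restrict Y) →
        (∀ᵐ x ∂volume.restrict Y, ‖ξ + V x‖ ^ p ≤ c * (1 + ⟪A x, ξ + V x⟫)) →
        (∀ᵐ x ∂volume.restrict Y, ‖A x‖ ≤ c * (1 + ‖ξ + V x‖ ^ (p - 1))) →
        Integrable (fun x => ⟪A x, V x⟫) (volume.restrict Y) →
        (∫ x in Y, ⟪A x, V x⟫) = 0 →
        (∫ x in Y, ‖ξ + V x‖ ^ p) ≤ C := by
  set μ := volume.restrict Y with hμ
  haveI : IsFiniteMeasure μ := ⟨by
    rw [hμ, Measure.restrict_apply_univ]; exact hYbdd.measure_lt_top⟩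
  set m : ℝ := (volume Y).toReal with hm
  have hm0 : 0 < m := ENNReal.toReal_pos hYpos.ne' hYbdd.measure_lt_top.ne
  set K : ℝ := c ^ 2 * (‖ξ‖ + 1) with hK
  have hK0 : 0 < K := by positivity
  set ε : ℝ := (2 * K)⁻¹ with hε
  have hε0 : 0 < ε := by positivity
  set D : ℝ := ε ^ (1 - p) with hD
  have hD0 : 0 ≤ D := Real.rpow_nonneg hε0.le _
  refine ⟨2 * (c * m + K * m + K * D * m) + 1, by positivity, ?_⟩
  intro V A hV hA hbd1 hbd2 hAVint hOrth
  -- basic positivity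
  have hp0 : (0:ℝ) < p := by linarith
  -- W := ξ + V
  have hW : MemLp (fun x => ξ + V x) (ENNReal.ofReal p) μ :=
    (memLp_const ξ).add hV
  -- integrability of ‖W‖^p
  have hEint : Integrable (fun x => ‖ξ + V x‖ ^ p) μ := by
    have := hW.integrable_norm_rpow (by simp [ENNReal.ofReal_eq_zero]; linarith)
      ENNReal.ofReal_ne_top
    simpa [ENNReal.toReal_ofReal hp0.le] using this
  -- integrability of ‖W‖^(p-1)
  have hJmeas : AEStronglyMeasurable (fun x => ‖ξ + V x‖ ^ (p - 1)) μ := by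
    have := hW.aestronglyMeasurable.norm.aemeasurable
    exact (this.pow aemeasurable_const).aestronglyMeasurable
  have hJint : Integrable (fun x => ‖ξ + V x‖ ^ (p - 1)) μ := by
    refine (hEint.add (integrable_const 1)).mono' hJmeas ?_
    refine Filter.Eventually.of_forall fun x => ?_
    have ha : (0:ℝ) ≤ ‖ξ + V x‖ := norm_nonneg _
    have h1 : ‖ξ + V x‖ ^ (p - 1) ≤ 1 * ‖ξ + V x‖ ^ p + 1 ^ (1 - p) :=
      young_aux hp one_pos ha
    have hnn : (0:ℝ) ≤ ‖ξ + V x‖ ^ (p - 1) := Real.rpow_nonneg ha _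
    rw [Real.norm_of_nonneg hnn]
    simpa using h1
  -- integrability of A (norm)
  have hAint : Integrable A μ := by
    refine (((integrable_const (1:ℝ)).add hJint).const_mul c).mono' hA ?_
    exact hbd2
  -- integrability of ⟪A, ξ⟫
  have hIξint : Integrable (fun x => ⟪A x, ξ⟫) μ := by
    refine (hAint.norm.mul_const ‖ξ‖).mono' (hA.inner aestronglyMeasurable_const) ?_
    refine Filter.Eventually.of_forall fun x => ?_
    calc ‖⟪A x, ξ⟫‖ ≤ ‖A x‖ * ‖ξ‖ := norm_inner_le_norm _ _
      _ = ‖A x‖ * ‖ξ‖ := rfl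
  -- integrability of ⟪A, W⟫
  have hinner_eq : ∀ x, ⟪A x, ξ + V x⟫ = ⟪A x, ξ⟫ + ⟪A x, V x⟫ := fun x =>
    inner_add_right _ _ _
  have hAWint : Integrable (fun x => ⟪A x, ξ + V x⟫) μ := by
    have := hIξint.add hAVint
    refine this.congr ?_
    exact Filter.Eventually.of_forall fun x => (hinner_eq x).symm
  -- notation
  set E : ℝ := ∫ x in Y, ‖ξ + V x‖ ^ p with hE
  set J : ℝ := ∫ x in Y, ‖ξ + V x‖ ^ (p - 1) with hJ
  set I : ℝ := ∫ x in Y, ⟪A x, ξ⟫ with hI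
  have hE0 : 0 ≤ E :=
    integral_nonneg fun x => Real.rpow_nonneg (norm_nonneg _) _
  -- Step 1 : E ≤ c * (m + I)
  have h1 : E ≤ c * (m + I) := by
    have hmono : E ≤ ∫ x in Y, c * (1 + ⟪A x, ξ + V x⟫) ∂volume := by
      refine integral_mono_ae hEint (((integrable_const (1:ℝ)).add hAWint).const_mul c) ?_
      exact hbd1
    have hcalc : (∫ x in Y, c * (1 + ⟪A x, ξ + V x⟫) ∂volume) = c * (m + I) := by
      rw [integral_const_mul, integral_add (integrable_const 1) hAWint]
      have h2 : (∫ x in Y, ⟪A x, ξ + V x⟫ ∂volume) = I := by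
        have : (∫ x in Y, ⟪A x, ξ + V x⟫ ∂volume)
            = (∫ x in Y, (⟪A x, ξ⟫ + ⟪A x, V x⟫) ∂volume) := by
          refine integral_congr_ae (Filter.Eventually.of_forall fun x => hinner_eq x)
        rw [this, integral_add hIξint hAVint, hOrth, add_zero]
      rw [h2]
      simp only [integral_const, hμ, measureReal_def, Measure.restrict_apply_univ, smul_eq_mul, mul_one, hm]
    linarith [hmono, hcalc.le]
  -- Step 2 : I ≤ c * ‖ξ‖ * (m + J)
  have h2 : I ≤ c * ‖ξ‖ * (m + J) := by
    have hmono : I ≤ ∫ x in Y, (c * (1 + ‖ξ + V x‖ ^ (p - 1))) * ‖ξ‖ ∂volume := by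
      refine integral_mono_ae hIξint
        ((((integrable_const (1:ℝ)).add hJint).const_mul c).mul_const ‖ξ‖) ?_
      filter_upwards [hbd2] with x hx
      calc ⟪A x, ξ⟫ ≤ ‖A x‖ * ‖ξ‖ := real_inner_le_norm _ _
        _ ≤ (c * (1 + ‖ξ + V x‖ ^ (p - 1))) * ‖ξ‖ :=
          mul_le_mul_of_nonneg_right hx (norm_nonneg _)
    have hcalc : (∫ x in Y, (c * (1 + ‖ξ + V x‖ ^ (p - 1))) * ‖ξ‖ ∂volume)
        = c * ‖ξ‖ * (m + J) := by
      rw [integral_mul_const, integral_const_mul,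
        integral_add (integrable_const 1) hJint]
      simp only [integral_const, hμ, measureReal_def, Measure.restrict_apply_univ, smul_eq_mul, mul_one, hm]
      ring
    linarith [hmono, hcalc.le]
  -- Step 3 : J ≤ ε * E + D * m
  have h3 : J ≤ ε * E + D * m := by
    have hmono : J ≤ ∫ x in Y, (ε * ‖ξ + V x‖ ^ p + D) ∂volume := by
      refine integral_mono_ae hJint ((hEint.const_mul ε).add (integrable_const D)) ?_
      refine Filter.Eventually.of_forall fun x => ?_
      exact young_aux hp hε0 (norm_nonneg _)
    have hcalc : (∫ x in Y, (ε * ‖ξ + V x‖ ^ p + D) ∂volume) = ε * E + D * m := by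
      rw [integral_add (hEint.const_mul ε) (integrable_const D), integral_const_mul]
      simp only [integral_const, hμ, measureReal_def, Measure.restrict_apply_univ, smul_eq_mul, hm]
      ring
    linarith [hmono, hcalc.le]
  -- combine
  have hξ0 : (0:ℝ) ≤ ‖ξ‖ := norm_nonneg _
  have hKε : c * (c * ‖ξ‖) * ε ≤ 1 / 2 := by
    rw [hε, hK]
    rw [mul_inv_le_iff₀ (by positivity)]
    nlinarith
  have hcξK : c * (c * ‖ξ‖) ≤ K := by rw [hK]; nlinarith
  -- E ≤ c*m + c*I ≤ c*m + c*(c‖ξ‖)(m + J) ≤ c*m + K*m + K*(εE + Dm)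
  have hJ0 : 0 ≤ J := integral_nonneg fun x => Real.rpow_nonneg (norm_nonneg _) _
  nlinarith [h1, h2, h3, mul_le_mul_of_nonneg_left h2 hc.le,
    mul_le_mul_of_nonneg_left h3 (by positivity : (0:ℝ) ≤ c * (c * ‖ξ‖)),
    mul_le_mul_of_nonneg_right hKε hE0,
    mul_le_mul_of_nonneg_right hcξK (by positivity : (0:ℝ) ≤ D * m),
    mul_le_mul_of_nonneg_right hcξK hm0.le]
end

section
/- Fix 1 < p < ∞, let Z ⊂ ℝ^n be a bounded open rectangle, and fix y ∈ ℝ^n. Let a : ℝ^n × ℝ^n × ℝ^n → ℝ^n satisfy, for a.e. z ∈ ℝ^n and all ξ, ξ_1, ξ_2 ∈ ℝ^n: a(y,z,0) = 0, |a(y,z,ξ_1) − a(y,z,ξ_2)| ≤ c_1 (1 + |ξ_1| + |ξ_2|)^{p−1−α} |ξ_1 − ξ_2|^α, and (a(y,z,ξ_1) − a(y,z,ξ_2), ξ_1 − ξ_2) ≥ c_2 (1 + |ξ_1| + |ξ_2|)^{p−β} |ξ_1 − ξ_2|^β, with c_1, c_2 > 0, 0 ≤ α ≤ min{1, p−1},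 max{p, 2} ≤ β < ∞. Let τ ∈ ℝ^n and let V ∈ L^p(Z; ℝ^n) satisfy ∫_Z (a(y, z, τ + V(z)), V(z)) dz = 0. Then there exists a constant c > 0, depending only on c_1, c_2, p, α, β and |Z| (and in particular independent of τ and y), such that ∫_Z |τ + V(z)|^p dz ≤ c (1 + |τ|^p). -/
open MeasureTheory
open scoped RealInnerProductSpace

private lemma aux_one_add_rpow_le {t r : ℝ} (ht : 0 ≤ t) (hr : 0 ≤ r) :
    (1 + t) ^ r ≤ 2 ^ r * (1 + t ^ r) := by
  rcases le_total t 1 with h | h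
  · calc (1 + t) ^ r ≤ 2 ^ r := Real.rpow_le_rpow (by linarith) (by linarith) hr
    _ = 2 ^ r * 1 := (mul_one _).symm
    _ ≤ 2 ^ r * (1 + t ^ r) := by
        have := Real.rpow_nonneg ht r
        have h2 := Real.rpow_nonneg (show (0:ℝ) ≤ 2 by norm_num) r
        nlinarith
  · calc (1 + t) ^ r ≤ (2 * t) ^ r := Real.rpow_le_rpow (by linarith) (by linarith) hr
    _ = 2 ^ r * t ^ r := Real.mul_rpow (by norm_num) ht
    _ ≤ 2 ^ r * (1 + t ^ r) := by
        have h2 := Real.rpow_nonneg (show (0:ℝ) ≤ 2 by norm_num) r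
        nlinarith

private lemma aux_rpow_le_one_add {t q r : ℝ} (ht : 0 ≤ t) (hq : 0 ≤ q) (hqr : q ≤ r) :
    t ^ q ≤ 1 + t ^ r := by
  rcases le_total t 1 with h | h
  · have h1 : t ^ q ≤ 1 := Real.rpow_le_one ht h hq
    have := Real.rpow_nonneg ht r
    linarith
  · have h1 : t ^ q ≤ t ^ r := Real.rpow_le_rpow_of_exponent_le h hqr
    have := Real.rpow_nonneg ht q
    linarith

private lemma aux_coercive {p β t : ℝ} (hp : 0 ≤ p) (hβ : p ≤ β) (ht : 0 ≤ t) :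
    2 ^ (p - β) * t ^ p - 1 ≤ (1 + t) ^ (p - β) * t ^ β := by
  rcases le_total t 1 with h | h
  · have h1 : t ^ p ≤ 1 := Real.rpow_le_one ht h hp
    have h2 : (2:ℝ) ^ (p - β) ≤ 1 :=
      Real.rpow_le_one_of_one_le_of_nonpos (by norm_num) (by linarith)
    have h3 : 0 ≤ (1 + t) ^ (p - β) * t ^ β :=
      mul_nonneg (Real.rpow_nonneg (by linarith) _) (Real.rpow_nonneg ht _)
    have h4 : 0 ≤ t ^ p := Real.rpow_nonneg ht p
    have h5 : (0:ℝ) ≤ 2 ^ (p - β) := Real.rpow_nonneg (by norm_num) _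
    nlinarith
  · have ht0 : (0:ℝ) < t := lt_of_lt_of_le one_pos h
    have h1 : (2 * t) ^ (p - β) ≤ (1 + t) ^ (p - β) :=
      Real.rpow_le_rpow_of_nonpos (by linarith) (by linarith) (by linarith)
    calc 2 ^ (p - β) * t ^ p - 1 ≤ 2 ^ (p - β) * t ^ p := by linarith
    _ = (2 * t) ^ (p - β) * t ^ β := by
        rw [Real.mul_rpow (by norm_num) ht, mul_assoc, ← Real.rpow_add ht0]
        ring_nf
    _ ≤ (1 + t) ^ (p - β) * t ^ β :=
        mul_le_mul_of_nonneg_right h1 (Real.rpow_nonneg ht _)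

private lemma aux_young {p s t δ : ℝ} (hp : 1 < p) (hs : 0 ≤ s) (ht : 0 ≤ t) (hδ : 0 < δ) :
    s * t ^ (p - 1) ≤ δ * t ^ p + δ ^ (1 - p) * s ^ p := by
  have hδ1 : 0 ≤ δ ^ (1 - p) := Real.rpow_nonneg hδ.le _
  have hsp : 0 ≤ s ^ p := Real.rpow_nonneg hs _
  have htp : 0 ≤ t ^ p := Real.rpow_nonneg ht _
  rcases eq_or_lt_of_le ht with h | ht0
  · rw [← h, Real.zero_rpow (by linarith), Real.zero_rpow (by linarith)]
    simpa using mul_nonneg hδ1 hsp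
  rcases le_total s (δ * t) with h | h
  · have h1 : s * t ^ (p - 1) ≤ (δ * t) * t ^ (p - 1) :=
      mul_le_mul_of_nonneg_right h (Real.rpow_nonneg ht _)
    have h2 : (δ * t) * t ^ (p - 1) = δ * t ^ p := by
      have ht1 : t ^ (1:ℝ) * t ^ (p - 1) = t ^ p := by
        rw [← Real.rpow_add ht0]; ring_nf
      rw [Real.rpow_one] at ht1
      rw [mul_assoc, ht1]
    calc s * t ^ (p - 1) ≤ δ * t ^ p := h2 ▸ h1
    _ ≤ δ * t ^ p + δ ^ (1 - p) * s ^ p := by nlinarith [mul_nonneg hδ1 hsp]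
  · have hs0 : 0 < s := lt_of_lt_of_le (by positivity) h
    have h1 : t ≤ s / δ := (le_div_iff₀ hδ).mpr (by linarith [mul_comm δ t])
    have h2 : t ^ (p - 1) ≤ (s / δ) ^ (p - 1) :=
      Real.rpow_le_rpow ht h1 (by linarith)
    have h3 : s * (s / δ) ^ (p - 1) = δ ^ (1 - p) * s ^ p := by
      rw [Real.div_rpow hs hδ.le]
      rw [eq_comm, show (1 - p) = -(p - 1) by ring, Real.rpow_neg hδ.le]
      rw [show p = (p - 1) + 1 by ring, Real.rpow_add hs0, Real.rpow_one]
      field_simp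
      ring
    calc s * t ^ (p - 1) ≤ s * (s / δ) ^ (p - 1) := mul_le_mul_of_nonneg_left h2 hs
    _ = δ ^ (1 - p) * s ^ p := h3
    _ ≤ δ * t ^ p + δ ^ (1 - p) * s ^ p := by nlinarith [mul_nonneg hδ.le htp]

set_option maxHeartbeats 1000000 in
/-- Energy bound for the cell problem: if `a(y,·,·)` satisfies the
structure conditions and `V ∈ L^p(Z;ℝⁿ)` satisfies `∫_Z (a(y,z,τ+V), V) dz = 0`, then
`∫_Z |τ + V|^p dz ≤ c (1 + |τ|^p)` with `c` depending only on `c₁, c₂, p, α, β, |Z|`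
(in particular independent of `τ` and `y`). -/
theorem cell_problem_energy_bound
    {n : ℕ} (p : ℝ) (hp : 1 < p)
    (c₁ c₂ α β : ℝ) (hc₁ : 0 < c₁) (hc₂ : 0 < c₂)
    (hα0 : 0 ≤ α) (hα : α ≤ min 1 (p - 1)) (hβ : max p 2 ≤ β)
    (l L : Fin n → ℝ) (hlL : ∀ i, l i < L i)
    (Z : Set (EuclideanSpace ℝ (Fin n)))
    (hZ : Z = {x : EuclideanSpace ℝ (Fin n) | ∀ i, x i ∈ Set.Ioo (l i) (L i)}) :
    ∃ c : ℝ, 0 < c ∧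
      ∀ (y : EuclideanSpace ℝ (Fin n))
        (a : EuclideanSpace ℝ (Fin n) → EuclideanSpace ℝ (Fin n) →
          EuclideanSpace ℝ (Fin n) → EuclideanSpace ℝ (Fin n)),
        (∀ᵐ z : EuclideanSpace ℝ (Fin n) ∂volume, a y z 0 = 0) →
        (∀ᵐ z : EuclideanSpace ℝ (Fin n) ∂volume,
          ∀ ξ₁ ξ₂ : EuclideanSpace ℝ (Fin n),
            ‖a y z ξ₁ - a y z ξ₂‖ ≤
              c₁ * (1 + ‖ξ₁‖ + ‖ξ₂‖) ^ (p - 1 - α) * ‖ξ₁ - ξ₂‖ ^ α) →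
        (∀ᵐ z : EuclideanSpace ℝ (Fin n) ∂volume,
          ∀ ξ₁ ξ₂ : EuclideanSpace ℝ (Fin n),
            ⟪a y z ξ₁ - a y z ξ₂, ξ₁ - ξ₂⟫ ≥
              c₂ * (1 + ‖ξ₁‖ + ‖ξ₂‖) ^ (p - β) * ‖ξ₁ - ξ₂‖ ^ β) →
        ∀ (τ : EuclideanSpace ℝ (Fin n))
          (V : EuclideanSpace ℝ (Fin n) → EuclideanSpace ℝ (Fin n)),
          MemLp V (ENNReal.ofReal p) (volume.restrict Z) →
          AEStronglyMeasurable (fun z => a y z (τ + V z)) (volume.restrict Z) →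
          Integrable (fun z => ⟪a y z (τ + V z), V z⟫) (volume.restrict Z) →
          (∫ z in Z, ⟪a y z (τ + V z), V z⟫) = 0 →
          (∫ z in Z, ‖τ + V z‖ ^ p) ≤ c * (1 + ‖τ‖ ^ p) := by
  have hp0 : (0:ℝ) < p := lt_trans one_pos hp
  have hβp : p ≤ β := le_trans (le_max_left p 2) hβ
  -- Z is bounded with finite volume
  have hvol : volume Z < ⊤ := by
    have hb : Bornology.IsBounded Z := by
      rw [isBounded_iff_forall_norm_le]
      refine ⟨Real.sqrt (∑ i, (max |l i| |L i|) ^ 2), fun x hx => ?_⟩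
      rw [hZ] at hx
      rw [EuclideanSpace.norm_eq]
      apply Real.sqrt_le_sqrt
      apply Finset.sum_le_sum
      intro i _
      have h1 := (hx i).1
      have h2 := (hx i).2
      have : |x i| ≤ max |l i| |L i| := by
        rw [abs_le]
        constructor
        · calc -(max |l i| |L i|) ≤ -|l i| := by simp [le_max_left]
          _ ≤ l i := neg_abs_le _
          _ ≤ x i := h1.le
        · calc x i ≤ L i := h2.le
          _ ≤ |L i| := le_abs_self _
          _ ≤ max |l i| |L i| := le_max_right _ _
      have h3 : (0:ℝ) ≤ max |l i| |L i| := le_trans (abs_nonneg _) (le_max_left _ _)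
      rw [Real.norm_eq_abs]
      nlinarith [abs_nonneg (x i)]
    calc volume Z ≤ volume (closure Z) := measure_mono subset_closure
    _ < ⊤ := hb.isCompact_closure.measure_lt_top
  haveI hfin : IsFiniteMeasure (volume.restrict Z) :=
    ⟨by rwa [Measure.restrict_apply_univ]⟩
  set m : ℝ := (volume Z).toReal with hm
  have hm0 : 0 ≤ m := ENNReal.toReal_nonneg
  set K : ℝ := c₂ * 2 ^ (p - β) with hKdef
  have hK0 : 0 < K := mul_pos hc₂ (Real.rpow_pos_of_pos two_pos _)
  set E : ℝ := c₁ * 2 ^ (p - 1) with hEdef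
  have hE0 : 0 < E := mul_pos hc₁ (Real.rpow_pos_of_pos two_pos _)
  set D : ℝ := (K / 2) ^ (1 - p) * E ^ p with hDdef
  have hD0 : 0 ≤ D := mul_nonneg (Real.rpow_nonneg (by positivity) _) (Real.rpow_nonneg hE0.le _)
  set S : ℝ := c₂ + E + D with hSdef
  have hS0 : 0 < S := by positivity
  refine ⟨(2 / K) * (m * S) + 1, by positivity, ?_⟩
  intro y a h0 hgrow hmono τ V hV ha hint horth
  clear_value m K E D S
  set μ := volume.restrict Z with hμdef
  set W : EuclideanSpace ℝ (Fin n) → EuclideanSpace ℝ (Fin n) := fun z => τ + V z with hWdef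
  have hWmem : MemLp W (ENNReal.ofReal p) μ := by
    exact (memLp_const τ).add hV
  have hWm : AEStronglyMeasurable W μ := hWmem.aestronglyMeasurable
  have hWp : Integrable (fun z => ‖W z‖ ^ p) μ := by
    have h1 := hWmem.integrable_norm_rpow
      (by rw [Ne, ENNReal.ofReal_eq_zero]; linarith) ENNReal.ofReal_ne_top
    rwa [ENNReal.toReal_ofReal hp0.le] at h1
  have hWp1 : Integrable (fun z => ‖W z‖ ^ (p - 1)) μ := by
    have hc : Continuous fun t : ℝ => t ^ (p - 1) :=
      continuous_id.rpow_const (fun x => Or.inr (by linarith))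
    refine Integrable.mono' ((integrable_const (1:ℝ)).add hWp)
      (hc.comp_aestronglyMeasurable hWm.norm)
      (Filter.Eventually.of_forall fun z => ?_)
    rw [Real.norm_eq_abs, abs_of_nonneg (Real.rpow_nonneg (norm_nonneg _) _)]
    exact aux_rpow_le_one_add (norm_nonneg _) (by linarith) (by linarith)
  have h0' : ∀ᵐ z ∂μ, a y z 0 = 0 := ae_restrict_of_ae h0
  have hgrow' := ae_restrict_of_ae (s := Z) hgrow
  have hmono' := ae_restrict_of_ae (s := Z) hmono
  -- growth bound on a
  have hbound_a : ∀ᵐ z ∂μ, ‖a y z (W z)‖ ≤ c₁ * (1 + ‖W z‖) ^ (p - 1) := by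
    filter_upwards [h0', hgrow'] with z hz0 hzg
    have h1 := hzg (W z) 0
    rw [hz0, sub_zero, sub_zero, norm_zero, add_zero] at h1
    have h2 : ‖W z‖ ^ α ≤ (1 + ‖W z‖) ^ α :=
      Real.rpow_le_rpow (norm_nonneg _) (by linarith [norm_nonneg (W z)]) hα0
    have h3 : (0:ℝ) < 1 + ‖W z‖ := by linarith [norm_nonneg (W z)]
    calc ‖a y z (W z)‖ ≤ c₁ * (1 + ‖W z‖) ^ (p - 1 - α) * ‖W z‖ ^ α := h1
    _ ≤ c₁ * (1 + ‖W z‖) ^ (p - 1 - α) * (1 + ‖W z‖) ^ α := by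
        apply mul_le_mul_of_nonneg_left h2
        positivity
    _ = c₁ * (1 + ‖W z‖) ^ (p - 1) := by
        rw [mul_assoc, ← Real.rpow_add h3]
        ring_nf
  -- g := inner with τ
  set g : EuclideanSpace ℝ (Fin n) → ℝ := fun z => ⟪a y z (W z), τ⟫ with hgdef
  have hgm : AEStronglyMeasurable g μ := by
    have hc : Continuous fun v : EuclideanSpace ℝ (Fin n) => ⟪v, τ⟫ :=
      continuous_id.inner continuous_const
    exact hc.comp_aestronglyMeasurable ha
  have hg_ptbound : ∀ᵐ z ∂μ, |g z| ≤ E * ‖τ‖ * (1 + ‖W z‖ ^ (p - 1)) := by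
    filter_upwards [hbound_a] with z hz
    have h1 : |g z| ≤ ‖a y z (W z)‖ * ‖τ‖ := abs_real_inner_le_norm _ _
    have h2 : (1 + ‖W z‖) ^ (p - 1) ≤ 2 ^ (p - 1) * (1 + ‖W z‖ ^ (p - 1)) :=
      aux_one_add_rpow_le (norm_nonneg _) (by linarith)
    have h4 : 0 ≤ (1 + ‖W z‖ ^ (p-1)) := by positivity
    calc |g z| ≤ ‖a y z (W z)‖ * ‖τ‖ := h1
    _ ≤ (c₁ * (1 + ‖W z‖) ^ (p - 1)) * ‖τ‖ :=
        mul_le_mul_of_nonneg_right hz (norm_nonneg _)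
    _ ≤ (c₁ * (2 ^ (p - 1) * (1 + ‖W z‖ ^ (p - 1)))) * ‖τ‖ := by
        apply mul_le_mul_of_nonneg_right _ (norm_nonneg _)
        exact mul_le_mul_of_nonneg_left h2 hc₁.le
    _ = E * ‖τ‖ * (1 + ‖W z‖ ^ (p - 1)) := by rw [hEdef]; ring
  have hg_int : Integrable g μ := by
    refine Integrable.mono' (((integrable_const (1:ℝ)).add hWp1).const_mul (E * ‖τ‖)) hgm ?_
    filter_upwards [hg_ptbound] with z hz
    simpa [Real.norm_eq_abs, mul_add] using hz
  -- splitting and orthogonality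
  have hsplit : (fun z => ⟪a y z (W z), W z⟫) =
      fun z => g z + ⟪a y z (W z), V z⟫ := by
    funext z
    rw [hgdef]
    simp only [hWdef]
    rw [← inner_add_right]
  have hf_int : Integrable (fun z => ⟪a y z (W z), W z⟫) μ := by
    rw [hsplit]; exact hg_int.add hint
  have hf_eq : ∫ z, ⟪a y z (W z), W z⟫ ∂μ = ∫ z, g z ∂μ := by
    rw [hsplit, integral_add hg_int hint]
    have : ∫ z, ⟪a y z (W z), V z⟫ ∂μ = 0 := horth
    rw [this, add_zero]
  -- lower bound
  have hlow_pt : ∀ᵐ z ∂μ, K * ‖W z‖ ^ p - c₂ ≤ ⟪a y z (W z), W z⟫ := by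
    filter_upwards [h0', hmono'] with z hz0 hzm
    have h1 := hzm (W z) 0
    rw [hz0, sub_zero, sub_zero, norm_zero, add_zero] at h1
    have h2 := aux_coercive hp0.le hβp (norm_nonneg (W z))
    have h3 : c₂ * (2 ^ (p - β) * ‖W z‖ ^ p - 1) ≤
        c₂ * ((1 + ‖W z‖) ^ (p - β) * ‖W z‖ ^ β) :=
      mul_le_mul_of_nonneg_left h2 hc₂.le
    calc K * ‖W z‖ ^ p - c₂ = c₂ * (2 ^ (p - β) * ‖W z‖ ^ p - 1) := by rw [hKdef]; ring
    _ ≤ c₂ * ((1 + ‖W z‖) ^ (p - β) * ‖W z‖ ^ β) := h3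
    _ = c₂ * (1 + ‖W z‖) ^ (p - β) * ‖W z‖ ^ β := by ring
    _ ≤ ⟪a y z (W z), W z⟫ := h1
  have hlow_int : Integrable (fun z => K * ‖W z‖ ^ p - c₂) μ :=
    (hWp.const_mul K).sub (integrable_const c₂)
  have hlow : K * (∫ z, ‖W z‖ ^ p ∂μ) - c₂ * m ≤ ∫ z, g z ∂μ := by
    have h1 := integral_mono_ae hlow_int hf_int hlow_pt
    rw [hf_eq] at h1
    rw [integral_sub (hWp.const_mul K) (integrable_const c₂), integral_const_mul,
      integral_const] at h1
    rw [show μ.real Set.univ = (volume Z).toReal by rw [hμdef, measureReal_def, Measure.restrict_apply_univ],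
      smul_eq_mul, ← hm] at h1
    linarith [h1]
  -- upper bound
  have hup_pt : ∀ᵐ z ∂μ, g z ≤ (E * ‖τ‖ + D * ‖τ‖ ^ p) + (K / 2) * ‖W z‖ ^ p := by
    filter_upwards [hg_ptbound] with z hz
    have h1 : g z ≤ E * ‖τ‖ + (E * ‖τ‖) * ‖W z‖ ^ (p - 1) := by
      have := le_of_abs_le hz
      nlinarith [this]
    have h2 := aux_young hp (s := E * ‖τ‖) (t := ‖W z‖) (δ := K / 2)
      (by positivity) (norm_nonneg _) (by positivity)
    have h3 : (K / 2) ^ (1 - p) * (E * ‖τ‖) ^ p = D * ‖τ‖ ^ p := by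
      rw [hDdef, Real.mul_rpow hE0.le (norm_nonneg _)]
      ring
    calc g z ≤ E * ‖τ‖ + (E * ‖τ‖) * ‖W z‖ ^ (p - 1) := h1
    _ ≤ E * ‖τ‖ + ((K / 2) * ‖W z‖ ^ p + (K / 2) ^ (1 - p) * (E * ‖τ‖) ^ p) := by linarith
    _ = (E * ‖τ‖ + D * ‖τ‖ ^ p) + (K / 2) * ‖W z‖ ^ p := by rw [h3]; ring
  have hup_int : Integrable (fun z => (E * ‖τ‖ + D * ‖τ‖ ^ p) + (K / 2) * ‖W z‖ ^ p) μ :=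
    (integrable_const _).add (hWp.const_mul _)
  have hup : ∫ z, g z ∂μ ≤ m * (E * ‖τ‖ + D * ‖τ‖ ^ p) + (K / 2) * ∫ z, ‖W z‖ ^ p ∂μ := by
    have h1 := integral_mono_ae hg_int hup_int hup_pt
    rw [integral_add (integrable_const _) (hWp.const_mul _), integral_const,
      integral_const_mul] at h1
    rw [show μ.real Set.univ = (volume Z).toReal by rw [hμdef, measureReal_def, Measure.restrict_apply_univ],
      smul_eq_mul, ← hm] at h1
    linarith [h1]
  -- combine
  set A : ℝ := ∫ z, ‖W z‖ ^ p ∂μ with hAdef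
  set T : ℝ := ‖τ‖ with hTdef
  have hT0 : 0 ≤ T := norm_nonneg _
  clear_value T
  have hTp0 : 0 ≤ T ^ p := Real.rpow_nonneg hT0 _
  have hT1 : T ≤ 1 + T ^ p := by
    have := aux_rpow_le_one_add hT0 (zero_le_one) hp.le
    rwa [Real.rpow_one] at this
  have hmain : (K / 2) * A ≤ m * S * (1 + T ^ p) := by
    have h1 : K * A - c₂ * m ≤ m * (E * T + D * T ^ p) + (K / 2) * A := le_trans hlow hup
    have h2 : m * (c₂ + E * T + D * T ^ p) ≤ m * (S * (1 + T ^ p)) := by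
      apply mul_le_mul_of_nonneg_left _ hm0
      rw [hSdef]
      nlinarith [mul_le_mul_of_nonneg_left hT1 hE0.le]
    have hKA : K * A = (K / 2) * A + (K / 2) * A := by ring
    have hm2 : m * (E * T + D * T ^ p) + c₂ * m = m * (c₂ + E * T + D * T ^ p) := by ring
    have hm3 : m * (S * (1 + T ^ p)) = m * S * (1 + T ^ p) := by ring
    linarith [h1, h2, hKA, hm2, hm3]
  have hKne : K ≠ 0 := hK0.ne'
  have hfinal : A ≤ ((2 / K) * (m * S) + 1) * (1 + T ^ p) := by
    have hcalc : (K / 2) * (((2 / K) * (m * S) + 1) * (1 + T ^ p)) =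
        m * S * (1 + T ^ p) + (K / 2) * (1 + T ^ p) := by
      field_simp
    have h2 : (K / 2) * A ≤ (K / 2) * (((2 / K) * (m * S) + 1) * (1 + T ^ p)) := by
      rw [hcalc]
      nlinarith [hmain, hK0, hTp0]
    exact le_of_mul_le_mul_left h2 (by positivity)
  exact hfinal
end

section
/- Fix 1 < p < ∞ and q = p/(p−1), let Z ⊂ ℝ^n be a bounded open rectangle. Let a : ℝ^n × ℝ^n × ℝ^n → ℝ^n satisfy, for a.e. z ∈ ℝ^n, all y, y_1, y_2 ∈ ℝ^n and all ξ, ξ_1, ξ_2 ∈ ℝ^n: a(y,z,0) = 0; |a(y,z,ξ_1) − a(y,z,ξ_2)| ≤ c_1 (1 + |ξ_1| + |ξ_2|)^{p−1−α} |ξ_1 − ξ_2|^α; (a(y,z,ξ_1) − a(y,z,ξ_2), ξ_1 − ξ_2) ≥ c_2 (1 + |ξ_1| + |ξ_2|)^{p−β} |ξ_1 − ξ_2|^β; and |a(y_1,z,ξ) − a(y_2,z,ξ)|^q ≤ ω(|y_1 − y_2|)(1 + |ξ|^p), where c_1, c_2 > 0, 0 < α ≤ min{1, p−1}, max{p, 2}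 ≤ β < ∞, and ω : ℝ → ℝ is continuous, increasing with ω(0) = 0. Let τ, y_1, y_2 ∈ ℝ^n and let V_1, V_2 ∈ L^p(Z; ℝ^n) satisfy the energy bounds ∫_Z |τ + V_i|^p dz ≤ c(1 + |τ|^p) for i = 1, 2 and the orthogonality relations ∫_Z (a(y_1, z, τ + V_1(z)), V_1(z) − V_2(z)) dz = 0 and ∫_Z (a(y_2, z, τ + V_2(z)), V_1(z) − V_2(z)) dz = 0. Then there exists a continuous increasing function ω̃ : ℝ → ℝ with ω̃(0) = 0, depending only on ω, c, c_1, c_2, p, α, β and |Z|, such that (∫_Z |V_1(z) − V_2(z)|^p dz)^{α/(p−1)} ≤ ω̃(|y_1 − y_2|)(1 + |τ|^p)^{α/(p−1)}. -/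
open MeasureTheory

private lemma memLp_of_int {α E : Type*} [MeasurableSpace α] {μ : Measure α}
    [NormedAddCommGroup E] {f : α → E} {r : ℝ} (hr : 0 < r)
    (hf : AEStronglyMeasurable f μ) (h : Integrable (fun x => ‖f x‖ ^ r) μ) :
    MemLp f (ENNReal.ofReal r) μ := by
  have hne : (ENNReal.ofReal r) ≠ 0 := by
    simp [ENNReal.ofReal_eq_zero, not_le, hr]
  have hnt : (ENNReal.ofReal r) ≠ ⊤ := ENNReal.ofReal_ne_top
  refine (memLp_norm_rpow_iff hf hne hnt).1 ?_
  rw [ENNReal.div_self hne hnt]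
  simp only [ENNReal.toReal_ofReal hr.le]
  rw [memLp_one_iff_integrable]
  exact h

private lemma int_norm_rpow {α E : Type*} [MeasurableSpace α] {μ : Measure α}
    [NormedAddCommGroup E] {f : α → E} {r : ℝ} (hr : 0 < r)
    (hf : MemLp f (ENNReal.ofReal r) μ) : Integrable (fun x => ‖f x‖ ^ r) μ := by
  have := hf.integrable_norm_rpow (by simp [ENNReal.ofReal_eq_zero, not_le, hr])
    ENNReal.ofReal_ne_top
  simpa [ENNReal.toReal_ofReal hr.le] using this

private lemma aux_max2 {p a : ℝ} (hp : 0 ≤ p) (ha : 0 ≤ a) :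
    (1 + a) ^ p ≤ 2 ^ p * (1 + a ^ p) := by
  have h1 : (1:ℝ) + a ≤ 2 * max 1 a := by
    rcases le_total a 1 with h | h
    · rw [max_eq_left h]; linarith
    · rw [max_eq_right h]; linarith
  have hm : (0:ℝ) ≤ max 1 a := le_trans zero_le_one (le_max_left _ _)
  calc (1+a)^p ≤ (2 * max 1 a)^p := Real.rpow_le_rpow (by positivity) h1 hp
    _ = 2^p * (max 1 a)^p := Real.mul_rpow (by norm_num) hm
    _ ≤ 2^p * (1 + a^p) := by
        have hb : (max 1 a)^p ≤ 1 + a^p := by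
          rcases max_cases 1 a with ⟨h, _⟩ | ⟨h, _⟩ <;> rw [h]
          · rw [Real.one_rpow]
            have := Real.rpow_nonneg ha p; linarith
          · have : (0:ℝ) ≤ 1 := zero_le_one; nlinarith [Real.rpow_nonneg ha p]
        have : (0:ℝ) ≤ 2^p := by positivity
        nlinarith [Real.rpow_nonneg hm p]

private lemma aux_max3 {p a b : ℝ} (hp : 0 ≤ p) (ha : 0 ≤ a) (hb : 0 ≤ b) :
    (1 + a + b) ^ p ≤ 3 ^ p * (1 + a ^ p + b ^ p) := by
  have hm : (0:ℝ) ≤ max 1 (max a b) := le_trans zero_le_one (le_max_left _ _)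
  have h1 : (1:ℝ) + a + b ≤ 3 * max 1 (max a b) := by
    have h2 : a ≤ max 1 (max a b) := le_trans (le_max_left a b) (le_max_right _ _)
    have h3 : b ≤ max 1 (max a b) := le_trans (le_max_right a b) (le_max_right _ _)
    have h4 : (1:ℝ) ≤ max 1 (max a b) := le_max_left _ _
    linarith
  calc (1+a+b)^p ≤ (3 * max 1 (max a b))^p := Real.rpow_le_rpow (by positivity) h1 hp
    _ = 3^p * (max 1 (max a b))^p := Real.mul_rpow (by norm_num) hm
    _ ≤ 3^p * (1 + a^p + b^p) := by
        have hb' : (max 1 (max a b))^p ≤ 1 + a^p + b^p := by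
          rcases max_cases 1 (max a b) with ⟨h, _⟩ | ⟨h, _⟩
          · rw [h, Real.one_rpow]
            have := Real.rpow_nonneg ha p
            have := Real.rpow_nonneg hb p; linarith
          · rcases max_cases a b with ⟨h2, _⟩ | ⟨h2, _⟩ <;> rw [h, h2]
            · have := Real.rpow_nonneg hb p; nlinarith
            · have := Real.rpow_nonneg ha p; nlinarith
        have h5 : (0:ℝ) ≤ 3^p := by positivity
        nlinarith [Real.rpow_nonneg hm p]


private lemma aux_alg {p q β c₂ K' K T Ω : ℝ} (hp : 1 < p) (hq : 1/q = (p-1)/p)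
    (hβ1 : 1 < β) (hc₂ : 0 < c₂) (hK' : 0 < K') (hK : 0 < K) (hT : 0 < T) (hΩ : 0 ≤ Ω) :
    ((K'*T) ^ ((β-p)/β) * (((Ω*K*T) ^ (1/q)) / c₂) ^ (p/β)) ^ (β/(β-1)) =
      (K' ^ ((β-p)/(β-1)) * c₂ ^ (-(p/(β-1))) * K ^ ((p-1)/(β-1))) * Ω ^ ((p-1)/(β-1)) * T := by
  have hp0 : (0:ℝ) < p := lt_trans one_pos hp
  have hp1 : (0:ℝ) < p - 1 := sub_pos.2 hp
  have hβ0 : (0:ℝ) < β := lt_trans one_pos hβ1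
  have hβ1' : (0:ℝ) < β - 1 := sub_pos.2 hβ1
  have hq' : 1/q ≠ 0 := by rw [hq]; positivity
  rcases hΩ.eq_or_lt with h0 | hΩp
  · rw [← h0]
    rw [zero_mul, zero_mul, Real.zero_rpow hq', zero_div,
      Real.zero_rpow (by positivity : p/β ≠ 0), mul_zero,
      Real.zero_rpow (by positivity : β/(β-1) ≠ 0),
      Real.zero_rpow (by positivity : (p-1)/(β-1) ≠ 0), mul_zero, zero_mul]
  · have hX : (0:ℝ) < Ω*K*T := by positivity
    have h1 : (0:ℝ) < K'*T := by positivity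
    have hb1 : (0:ℝ) < (K'*T) ^ ((β-p)/β) := Real.rpow_pos_of_pos h1 _
    have hb2 : (0:ℝ) < ((Ω*K*T) ^ (1/q)) / c₂ := by positivity
    have hb2' : (0:ℝ) < (((Ω*K*T) ^ (1/q)) / c₂) ^ (p/β) := Real.rpow_pos_of_pos hb2 _
    have hLpos : (0:ℝ) < ((K'*T) ^ ((β-p)/β) * (((Ω*K*T) ^ (1/q)) / c₂) ^ (p/β)) ^ (β/(β-1)) :=
      Real.rpow_pos_of_pos (mul_pos hb1 hb2') _
    have hRpos : (0:ℝ) <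
        (K' ^ ((β-p)/(β-1)) * c₂ ^ (-(p/(β-1))) * K ^ ((p-1)/(β-1))) * Ω ^ ((p-1)/(β-1)) * T := by
      have := Real.rpow_pos_of_pos hΩp ((p-1)/(β-1))
      positivity
    refine Real.log_injOn_pos (Set.mem_Ioi.2 hLpos) (Set.mem_Ioi.2 hRpos) ?_
    rw [Real.log_rpow (mul_pos hb1 hb2'), Real.log_mul hb1.ne' hb2'.ne',
      Real.log_rpow h1, Real.log_rpow hb2,
      Real.log_div (Real.rpow_pos_of_pos hX _).ne' hc₂.ne',
      Real.log_rpow hX, Real.log_mul (mul_pos hΩp hK).ne' hT.ne',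
      Real.log_mul hΩp.ne' hK.ne', Real.log_mul hK'.ne' hT.ne',
      Real.log_mul (by positivity :
        (K' ^ ((β-p)/(β-1)) * c₂ ^ (-(p/(β-1))) * K ^ ((p-1)/(β-1))) * Ω ^ ((p-1)/(β-1)) ≠ 0)
        hT.ne',
      Real.log_mul (by positivity :
        K' ^ ((β-p)/(β-1)) * c₂ ^ (-(p/(β-1))) * K ^ ((p-1)/(β-1)) ≠ 0)
        (Real.rpow_pos_of_pos hΩp _).ne',
      Real.log_mul (by positivity : K' ^ ((β-p)/(β-1)) * c₂ ^ (-(p/(β-1))) ≠ 0)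
        (Real.rpow_pos_of_pos hK _).ne',
      Real.log_mul (Real.rpow_pos_of_pos hK' _).ne' (Real.rpow_pos_of_pos hc₂ _).ne',
      Real.log_rpow hK', Real.log_rpow hc₂, Real.log_rpow hK, Real.log_rpow hΩp, hq]
    field_simp
    ring




open MeasureTheory
open scoped RealInnerProductSpace

set_option maxHeartbeats 2000000 in
/-- Continuity of the cell-problem solutions with respect to the slow
variable: under the structure conditions on `a` (with modulus of continuity `ω` in the
first variable), if `V₁, V₂` satisfy the energy bounds and the orthogonality relations
of the two cell problems at `y₁, y₂`, then
`(∫_Z |V₁ − V₂|^p)^{α/(p−1)} ≤ ω̃(|y₁ − y₂|)(1 + |τ|^p)^{α/(p−1)}` for a modulus `ω̃`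
depending only on `ω, c, c₁, c₂, p, α, β, |Z|`. -/
theorem cell_solutions_continuity_in_slow_variable
    {n : ℕ} (p q : ℝ) (hp : 1 < p) (hq : q = p / (p - 1))
    (c c₁ c₂ α β : ℝ) (hc : 0 < c) (hc₁ : 0 < c₁) (hc₂ : 0 < c₂)
    (hα0 : 0 < α) (hα : α ≤ min 1 (p - 1)) (hβ : max p 2 ≤ β)
    (ω : ℝ → ℝ) (hωcont : Continuous ω) (hωmono : Monotone ω) (hω0 : ω 0 = 0)
    (l L : Fin n → ℝ) (hlL : ∀ i, l i < L i)
    (Z : Set (EuclideanSpace ℝ (Fin n)))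
    (hZ : Z = {x : EuclideanSpace ℝ (Fin n) | ∀ i, x i ∈ Set.Ioo (l i) (L i)}) :
    ∃ ω' : ℝ → ℝ, Continuous ω' ∧ Monotone ω' ∧ ω' 0 = 0 ∧
      ∀ (a : EuclideanSpace ℝ (Fin n) → EuclideanSpace ℝ (Fin n) →
          EuclideanSpace ℝ (Fin n) → EuclideanSpace ℝ (Fin n)),
        (∀ᵐ z : EuclideanSpace ℝ (Fin n) ∂volume,
          ∀ y : EuclideanSpace ℝ (Fin n), a y z 0 = 0) →
        (∀ᵐ z : EuclideanSpace ℝ (Fin n) ∂volume,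
          ∀ y ξ₁ ξ₂ : EuclideanSpace ℝ (Fin n),
            ‖a y z ξ₁ - a y z ξ₂‖ ≤
              c₁ * (1 + ‖ξ₁‖ + ‖ξ₂‖) ^ (p - 1 - α) * ‖ξ₁ - ξ₂‖ ^ α) →
        (∀ᵐ z : EuclideanSpace ℝ (Fin n) ∂volume,
          ∀ y ξ₁ ξ₂ : EuclideanSpace ℝ (Fin n),
            ⟪a y z ξ₁ - a y z ξ₂, ξ₁ - ξ₂⟫ ≥
              c₂ * (1 + ‖ξ₁‖ + ‖ξ₂‖) ^ (p - β) * ‖ξ₁ - ξ₂‖ ^ β) →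
        (∀ᵐ z : EuclideanSpace ℝ (Fin n) ∂volume,
          ∀ y₁ y₂ ξ : EuclideanSpace ℝ (Fin n),
            ‖a y₁ z ξ - a y₂ z ξ‖ ^ q ≤ ω ‖y₁ - y₂‖ * (1 + ‖ξ‖ ^ p)) →
        ∀ (τ y₁ y₂ : EuclideanSpace ℝ (Fin n))
          (V₁ V₂ : EuclideanSpace ℝ (Fin n) → EuclideanSpace ℝ (Fin n)),
          MemLp V₁ (ENNReal.ofReal p) (volume.restrict Z) →
          MemLp V₂ (ENNReal.ofReal p) (volume.restrict Z) →
          -- energy bounds for the two cell solutions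
          (∫ z in Z, ‖τ + V₁ z‖ ^ p) ≤ c * (1 + ‖τ‖ ^ p) →
          (∫ z in Z, ‖τ + V₂ z‖ ^ p) ≤ c * (1 + ‖τ‖ ^ p) →
          -- measurability of the composed coefficients
          AEStronglyMeasurable (fun z => a y₁ z (τ + V₁ z)) (volume.restrict Z) →
          AEStronglyMeasurable (fun z => a y₁ z (τ + V₂ z)) (volume.restrict Z) →
          AEStronglyMeasurable (fun z => a y₂ z (τ + V₁ z)) (volume.restrict Z) →
          AEStronglyMeasurable (fun z => a y₂ z (τ + V₂ z)) (volume.restrict Z) →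
          -- orthogonality relations
          Integrable (fun z => ⟪a y₁ z (τ + V₁ z), V₁ z - V₂ z⟫)
            (volume.restrict Z) →
          Integrable (fun z => ⟪a y₂ z (τ + V₂ z), V₁ z - V₂ z⟫)
            (volume.restrict Z) →
          (∫ z in Z, ⟪a y₁ z (τ + V₁ z), V₁ z - V₂ z⟫) = 0 →
          (∫ z in Z, ⟪a y₂ z (τ + V₂ z), V₁ z - V₂ z⟫) = 0 →
          (∫ z in Z, ‖V₁ z - V₂ z‖ ^ p) ^ (α / (p - 1)) ≤
            ω' ‖y₁ - y₂‖ * (1 + ‖τ‖ ^ p) ^ (α / (p - 1)) := by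
  
  classical
  -- exponent facts
  have hp0 : (0:ℝ) < p := lt_trans one_pos hp
  have hp1 : (0:ℝ) < p - 1 := sub_pos.2 hp
  have hpq : p.HolderConjugate q := by
    rw [hq]; exact Real.HolderConjugate.conjExponent hp
  have hq1 : 1 < q := (Real.holderConjugate_iff.mp hpq.symm).1
  have hq0 : (0:ℝ) < q := lt_trans one_pos hq1
  have hqinv : 1/q = (p-1)/p := by rw [hq, one_div_div]
  have hβ2 : (2:ℝ) ≤ β := le_trans (le_max_right p 2) hβ
  have hβp : p ≤ β := le_trans (le_max_left p 2) hβ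
  have hβ1 : (1:ℝ) < β := lt_of_lt_of_le one_lt_two hβ2
  have hβ0 : (0:ℝ) < β := lt_trans one_pos hβ1
  have hβ1' : (0:ℝ) < β - 1 := sub_pos.2 hβ1
  have hβp0 : (0:ℝ) ≤ β - p := sub_nonneg.2 hβp
  have hα1 : α ≤ 1 := le_trans hα (min_le_left _ _)
  have hqp : (p - 1) * q = p := by rw [hq]; field_simp
  -- volume of Z is finite
  have hZfin : volume Z ≠ ⊤ := by
    have hb : Bornology.IsBounded Z := by
      have hsub : Z ⊆ Metric.closedBall 0 (Real.sqrt (∑ i, (max |l i| |L i|) ^ 2)) := by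
        intro x hx
        rw [hZ] at hx
        rw [Metric.mem_closedBall, dist_zero_right, EuclideanSpace.norm_eq]
        apply Real.sqrt_le_sqrt
        apply Finset.sum_le_sum
        intro i _
        have h := hx i
        have hxi : ‖x i‖ ≤ max |l i| |L i| := by
          rw [Real.norm_eq_abs, abs_le]
          constructor
          · have h1 : -(max |l i| |L i|) ≤ -|l i| := neg_le_neg (le_max_left _ _)
            exact le_trans h1 (le_trans (neg_abs_le (l i)) h.1.le)
          · exact le_trans h.2.le (le_trans (le_abs_self _) (le_max_right _ _))
        exact pow_le_pow_left₀ (norm_nonneg _) hxi 2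
      exact Metric.isBounded_closedBall.subset hsub
    exact hb.measure_lt_top.ne
  -- constants
  set ZV : ℝ := (volume Z).toReal with hZVdef
  have hZV0 : (0:ℝ) ≤ ZV := ENNReal.toReal_nonneg
  set K : ℝ := ZV + c with hKdef
  have hK0 : (0:ℝ) < K := by rw [hKdef]; positivity
  set K' : ℝ := 3^p*(ZV+2*c) with hK'def
  have hK'0 : (0:ℝ) < K' := by
    rw [hK'def]
    have : (0:ℝ) < (3:ℝ)^p := Real.rpow_pos_of_pos (by norm_num) p
    positivity
  set C₁ : ℝ := K' ^ ((β-p)/(β-1)) * c₂ ^ (-(p/(β-1))) * K ^ ((p-1)/(β-1)) with hC₁def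
  have hC₁0 : (0:ℝ) < C₁ := by
    rw [hC₁def]
    exact mul_pos (mul_pos (Real.rpow_pos_of_pos hK'0 _) (Real.rpow_pos_of_pos hc₂ _))
      (Real.rpow_pos_of_pos hK0 _)
  refine ⟨fun t => C₁ ^ (α/(p-1)) * (max (ω t) 0) ^ (α/(β-1)), ?_, ?_, ?_, ?_⟩
  · -- continuity
    apply Continuous.mul continuous_const
    have h2 : Continuous fun x : ℝ => x ^ (α/(β-1)) := by
      rw [continuous_iff_continuousAt]
      exact fun x => Real.continuousAt_rpow_const x _ (Or.inr (by positivity))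
    exact h2.comp (hωcont.max continuous_const)
  · -- monotone
    intro s t hst
    refine mul_le_mul_of_nonneg_left ?_ (Real.rpow_nonneg hC₁0.le _)
    exact Real.rpow_le_rpow (le_max_right _ _) (max_le_max (hωmono hst) le_rfl)
      (by positivity)
  · -- zero at zero
    simp only [hω0, max_self, Real.zero_rpow (by positivity : α/(β-1) ≠ 0), mul_zero]
  intro a ha0 haLip hamono hamod τ y₁ y₂ V₁ V₂ hV₁ hV₂ hE₁ hE₂ hm11 hm12 hm21 hm22
    hint1 hint2 horth1 horth2
  haveI hfin : IsFiniteMeasure (volume.restrict Z) :=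
    ⟨by rw [Measure.restrict_apply_univ]; exact hZfin.lt_top⟩
  have hΩ0 : (0:ℝ) ≤ ω ‖y₁ - y₂‖ := by rw [← hω0]; exact hωmono (norm_nonneg _)
  have hT1 : (1:ℝ) ≤ 1 + ‖τ‖^p := le_add_of_nonneg_right (Real.rpow_nonneg (norm_nonneg _) _)
  have hT0 : (0:ℝ) < 1 + ‖τ‖^p := lt_of_lt_of_le one_pos hT1
  -- membership and integrability basics
  have hconst : MemLp (fun _ : EuclideanSpace ℝ (Fin n) => τ) (ENNReal.ofReal p)
      (volume.restrict Z) := memLp_const τ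
  have hf₁mem : MemLp (fun z => τ + V₁ z) (ENNReal.ofReal p) (volume.restrict Z) :=
    hconst.add hV₁
  have hf₂mem : MemLp (fun z => τ + V₂ z) (ENNReal.ofReal p) (volume.restrict Z) :=
    hconst.add hV₂
  have hWmem : MemLp (fun z => V₁ z - V₂ z) (ENNReal.ofReal p) (volume.restrict Z) :=
    hV₁.sub hV₂
  have hintWp : Integrable (fun z => ‖V₁ z - V₂ z‖ ^ p) (volume.restrict Z) :=
    int_norm_rpow hp0 hWmem
  have hintf₁p : Integrable (fun z => ‖τ + V₁ z‖ ^ p) (volume.restrict Z) :=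
    int_norm_rpow hp0 hf₁mem
  have hintf₂p : Integrable (fun z => ‖τ + V₂ z‖ ^ p) (volume.restrict Z) :=
    int_norm_rpow hp0 hf₂mem
  have hM0 : (0:ℝ) ≤ ∫ z in Z, ‖V₁ z - V₂ z‖ ^ p :=
    integral_nonneg fun z => Real.rpow_nonneg (norm_nonneg _) _
  have hone : (∫ (_ : EuclideanSpace ℝ (Fin n)) in Z, (1:ℝ)) = ZV := by
    rw [integral_const, smul_eq_mul, mul_one, measureReal_def, Measure.restrict_apply_univ]
  -- growth bound
  have hgrow : ∀ᵐ z ∂(volume.restrict Z), ∀ y ξ : EuclideanSpace ℝ (Fin n),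
      ‖a y z ξ‖ ≤ c₁ * (1 + ‖ξ‖) ^ (p-1) := by
    filter_upwards [ae_restrict_of_ae ha0, ae_restrict_of_ae haLip] with z h0 hL y ξ
    have h := hL y ξ 0
    rw [h0 y, sub_zero, sub_zero, norm_zero, add_zero] at h
    have h1 : (0:ℝ) < 1 + ‖ξ‖ := by positivity
    calc ‖a y z ξ‖ ≤ c₁ * (1 + ‖ξ‖) ^ (p-1-α) * ‖ξ‖ ^ α := h
      _ ≤ c₁ * (1 + ‖ξ‖) ^ (p-1-α) * (1 + ‖ξ‖) ^ α := by
          refine mul_le_mul_of_nonneg_left ?_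
            (mul_nonneg hc₁.le (Real.rpow_nonneg h1.le _))
          exact Real.rpow_le_rpow (norm_nonneg _) (by linarith) hα0.le
      _ = c₁ * (1 + ‖ξ‖) ^ (p-1) := by
          rw [mul_assoc, ← Real.rpow_add h1, show p-1-α+α = p-1 by ring]
  -- L^q integrability of the composed coefficients
  have hAq : ∀ (y : EuclideanSpace ℝ (Fin n))
      (f : EuclideanSpace ℝ (Fin n) → EuclideanSpace ℝ (Fin n)),
      Integrable (fun z => ‖f z‖ ^ p) (volume.restrict Z) →
      AEStronglyMeasurable (fun z => a y z (f z)) (volume.restrict Z) →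
      Integrable (fun z => ‖a y z (f z)‖ ^ q) (volume.restrict Z) := by
    intro y f hfint hfm
    have hdom : Integrable (fun z => (c₁^q * 2^p) * (1 + ‖f z‖^p)) (volume.restrict Z) :=
      ((integrable_const (1:ℝ)).add hfint).const_mul _
    refine Integrable.mono' hdom
      ((hfm.norm.aemeasurable.pow aemeasurable_const).aestronglyMeasurable) ?_
    filter_upwards [hgrow] with z hg
    rw [Real.norm_of_nonneg (Real.rpow_nonneg (norm_nonneg _) _)]
    have h1 : (0:ℝ) ≤ 1 + ‖f z‖ := by positivity
    calc ‖a y z (f z)‖ ^ q ≤ (c₁ * (1+‖f z‖)^(p-1)) ^ q :=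
          Real.rpow_le_rpow (norm_nonneg _) (hg y (f z)) hq0.le
      _ = c₁^q * ((1+‖f z‖)^(p-1))^q := Real.mul_rpow hc₁.le (Real.rpow_nonneg h1 _)
      _ = c₁^q * (1+‖f z‖)^p := by rw [← Real.rpow_mul h1, hqp]
      _ ≤ c₁^q * (2^p * (1 + ‖f z‖^p)) := by
          refine mul_le_mul_of_nonneg_left (aux_max2 hp0.le (norm_nonneg _)) ?_
          exact Real.rpow_nonneg hc₁.le _
      _ = (c₁^q * 2^p) * (1 + ‖f z‖^p) := by ring
  have hq21int := hAq y₂ (fun z => τ + V₁ z) hintf₁p hm21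
  have hq11int := hAq y₁ (fun z => τ + V₁ z) hintf₁p hm11
  have hmem21 : MemLp (fun z => a y₂ z (τ + V₁ z)) (ENNReal.ofReal q) (volume.restrict Z) :=
    memLp_of_int hq0 hm21 hq21int
  have hmem11 : MemLp (fun z => a y₁ z (τ + V₁ z)) (ENNReal.ofReal q) (volume.restrict Z) :=
    memLp_of_int hq0 hm11 hq11int
  have hgmem : MemLp (fun z => a y₁ z (τ + V₁ z) - a y₂ z (τ + V₁ z))
      (ENNReal.ofReal q) (volume.restrict Z) := hmem11.sub hmem21
  have hgqint : Integrable (fun z => ‖a y₁ z (τ + V₁ z) - a y₂ z (τ + V₁ z)‖ ^ q)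
      (volume.restrict Z) := int_norm_rpow hq0 hgmem
  -- integrability of inner products
  have hintA21W : Integrable (fun z => ⟪a y₂ z (τ + V₁ z), V₁ z - V₂ z⟫)
      (volume.restrict Z) := by
    have hdom : Integrable (fun z => ‖a y₂ z (τ + V₁ z)‖^q/q + ‖V₁ z - V₂ z‖^p/p)
        (volume.restrict Z) := (hq21int.div_const q).add (hintWp.div_const p)
    refine Integrable.mono' hdom (hm21.inner (hV₁.1.sub hV₂.1)) ?_
    filter_upwards with z
    calc ‖⟪a y₂ z (τ + V₁ z), V₁ z - V₂ z⟫‖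
        ≤ ‖a y₂ z (τ + V₁ z)‖ * ‖V₁ z - V₂ z‖ := norm_inner_le_norm _ _
      _ ≤ ‖a y₂ z (τ + V₁ z)‖^q/q + ‖V₁ z - V₂ z‖^p/p :=
          Real.young_inequality_of_nonneg (norm_nonneg _) (norm_nonneg _) hpq.symm
  have hgW : Integrable (fun z => ‖a y₁ z (τ + V₁ z) - a y₂ z (τ + V₁ z)‖ * ‖V₁ z - V₂ z‖)
      (volume.restrict Z) := by
    have hdom : Integrable
        (fun z => ‖a y₁ z (τ + V₁ z) - a y₂ z (τ + V₁ z)‖^q/q + ‖V₁ z - V₂ z‖^p/p)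
        (volume.restrict Z) := (hgqint.div_const q).add (hintWp.div_const p)
    refine Integrable.mono' hdom ((hm11.sub hm21).norm.mul (hV₁.1.sub hV₂.1).norm) ?_
    filter_upwards with z
    rw [Real.norm_of_nonneg (mul_nonneg (norm_nonneg _) (norm_nonneg _))]
    exact Real.young_inequality_of_nonneg (norm_nonneg _) (norm_nonneg _) hpq.symm
  -- orthogonality manipulations
  have hsubint2 : Integrable
      (fun z => ⟪a y₂ z (τ + V₁ z) - a y₂ z (τ + V₂ z), V₁ z - V₂ z⟫)
      (volume.restrict Z) := by
    have heq : (fun z => ⟪a y₂ z (τ + V₁ z) - a y₂ z (τ + V₂ z), V₁ z - V₂ z⟫)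
        = fun z => ⟪a y₂ z (τ + V₁ z), V₁ z - V₂ z⟫ - ⟪a y₂ z (τ + V₂ z), V₁ z - V₂ z⟫ := by
      funext z; rw [inner_sub_left]
    rw [heq]; exact hintA21W.sub hint2
  have hsubint1 : Integrable
      (fun z => ⟪a y₂ z (τ + V₁ z) - a y₁ z (τ + V₁ z), V₁ z - V₂ z⟫)
      (volume.restrict Z) := by
    have heq : (fun z => ⟪a y₂ z (τ + V₁ z) - a y₁ z (τ + V₁ z), V₁ z - V₂ z⟫)
        = fun z => ⟪a y₂ z (τ + V₁ z), V₁ z - V₂ z⟫ - ⟪a y₁ z (τ + V₁ z), V₁ z - V₂ z⟫ := by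
      funext z; rw [inner_sub_left]
    rw [heq]; exact hintA21W.sub hint1
  have hI21 : (∫ z in Z, ⟪a y₂ z (τ + V₁ z) - a y₂ z (τ + V₂ z), V₁ z - V₂ z⟫)
      = ∫ z in Z, ⟪a y₂ z (τ + V₁ z), V₁ z - V₂ z⟫ := by
    simp_rw [inner_sub_left]
    rw [integral_sub hintA21W hint2, horth2, sub_zero]
  have hInegeq : (∫ z in Z, ⟪a y₂ z (τ + V₁ z) - a y₁ z (τ + V₁ z), V₁ z - V₂ z⟫)
      = ∫ z in Z, ⟪a y₂ z (τ + V₁ z), V₁ z - V₂ z⟫ := by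
    simp_rw [inner_sub_left]
    rw [integral_sub hintA21W hint1, horth1, sub_zero]
  -- lower bound via monotonicity
  have ptmono : ∀ᵐ z ∂(volume.restrict Z),
      c₂ * ((1+‖τ+V₁ z‖+‖τ+V₂ z‖)^(p-β) * ‖V₁ z - V₂ z‖^β)
        ≤ ⟪a y₂ z (τ + V₁ z) - a y₂ z (τ + V₂ z), V₁ z - V₂ z⟫ := by
    filter_upwards [ae_restrict_of_ae hamono] with z hz
    have h := hz y₂ (τ + V₁ z) (τ + V₂ z)
    rw [add_sub_add_left_eq_sub] at h
    calc c₂ * ((1+‖τ+V₁ z‖+‖τ+V₂ z‖)^(p-β) * ‖V₁ z - V₂ z‖^β)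
        = c₂ * (1+‖τ+V₁ z‖+‖τ+V₂ z‖)^(p-β) * ‖V₁ z - V₂ z‖^β := (mul_assoc _ _ _).symm
      _ ≤ _ := h
  have hSaem : AEMeasurable (fun z => 1 + ‖τ + V₁ z‖ + ‖τ + V₂ z‖) (volume.restrict Z) :=
    (aemeasurable_const.add hf₁mem.1.norm.aemeasurable).add hf₂mem.1.norm.aemeasurable
  have hJint : Integrable (fun z => (1+‖τ+V₁ z‖+‖τ+V₂ z‖)^(p-β) * ‖V₁ z - V₂ z‖^β)
      (volume.restrict Z) := by
    refine Integrable.mono (hsubint2.div_const c₂) ?_ ?_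
    · exact ((hSaem.pow aemeasurable_const).aestronglyMeasurable).mul
        (((hV₁.1.sub hV₂.1).norm.aemeasurable.pow aemeasurable_const).aestronglyMeasurable)
    · filter_upwards [ptmono] with z hz
      have hS1 : (0:ℝ) ≤ 1+‖τ+V₁ z‖+‖τ+V₂ z‖ := by positivity
      have h0 : (0:ℝ) ≤ (1+‖τ+V₁ z‖+‖τ+V₂ z‖)^(p-β) * ‖V₁ z - V₂ z‖^β :=
        mul_nonneg (Real.rpow_nonneg hS1 _) (Real.rpow_nonneg (norm_nonneg _) _)
      rw [Real.norm_of_nonneg h0]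
      refine le_trans ((le_div_iff₀' hc₂).2 hz) ?_
      rw [Real.norm_eq_abs]
      exact le_abs_self _
  have hJ0 : (0:ℝ) ≤ ∫ z in Z, (1+‖τ+V₁ z‖+‖τ+V₂ z‖)^(p-β) * ‖V₁ z - V₂ z‖^β :=
    integral_nonneg fun z => mul_nonneg (Real.rpow_nonneg (by positivity) _)
      (Real.rpow_nonneg (norm_nonneg _) _)
  have hc₂J : c₂ * (∫ z in Z, (1+‖τ+V₁ z‖+‖τ+V₂ z‖)^(p-β) * ‖V₁ z - V₂ z‖^β)
      ≤ ∫ z in Z, ⟪a y₂ z (τ + V₁ z) - a y₂ z (τ + V₂ z), V₁ z - V₂ z⟫ := by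
    rw [← integral_const_mul]
    exact integral_mono_ae (hJint.const_mul c₂) hsubint2 ptmono
  -- Hölder upper bound for I
  have hHold : (∫ z in Z, ‖a y₁ z (τ + V₁ z) - a y₂ z (τ + V₁ z)‖ * ‖V₁ z - V₂ z‖)
      ≤ (∫ z in Z, ‖a y₁ z (τ + V₁ z) - a y₂ z (τ + V₁ z)‖^q)^(1/q)
        * (∫ z in Z, ‖V₁ z - V₂ z‖^p)^(1/p) :=
    integral_mul_norm_le_Lp_mul_Lq hpq.symm hgmem hWmem
  have hIup : (∫ z in Z, ⟪a y₂ z (τ + V₁ z), V₁ z - V₂ z⟫)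
      ≤ ∫ z in Z, ‖a y₁ z (τ + V₁ z) - a y₂ z (τ + V₁ z)‖ * ‖V₁ z - V₂ z‖ := by
    rw [← hInegeq]
    refine integral_mono_ae hsubint1 hgW ?_
    filter_upwards with z
    calc ⟪a y₂ z (τ + V₁ z) - a y₁ z (τ + V₁ z), V₁ z - V₂ z⟫
        ≤ ‖a y₂ z (τ + V₁ z) - a y₁ z (τ + V₁ z)‖ * ‖V₁ z - V₂ z‖ := real_inner_le_norm _ _
      _ = ‖a y₁ z (τ + V₁ z) - a y₂ z (τ + V₁ z)‖ * ‖V₁ z - V₂ z‖ := by rw [norm_sub_rev]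
  have hgq0 : (0:ℝ) ≤ ∫ z in Z, ‖a y₁ z (τ + V₁ z) - a y₂ z (τ + V₁ z)‖^q :=
    integral_nonneg fun z => Real.rpow_nonneg (norm_nonneg _) _
  have hgqb : (∫ z in Z, ‖a y₁ z (τ + V₁ z) - a y₂ z (τ + V₁ z)‖^q)
      ≤ ω ‖y₁ - y₂‖ * K * (1 + ‖τ‖^p) := by
    have pt : ∀ᵐ z ∂(volume.restrict Z),
        ‖a y₁ z (τ + V₁ z) - a y₂ z (τ + V₁ z)‖^q ≤ ω ‖y₁ - y₂‖ * (1 + ‖τ + V₁ z‖^p) := by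
      filter_upwards [ae_restrict_of_ae hamod] with z hz
      exact hz y₁ y₂ (τ + V₁ z)
    have hdom3 : Integrable (fun z => ω ‖y₁ - y₂‖ * (1 + ‖τ + V₁ z‖^p))
        (volume.restrict Z) := ((integrable_const 1).add hintf₁p).const_mul _
    calc (∫ z in Z, ‖a y₁ z (τ + V₁ z) - a y₂ z (τ + V₁ z)‖^q)
        ≤ ∫ z in Z, ω ‖y₁ - y₂‖ * (1 + ‖τ + V₁ z‖^p) := integral_mono_ae hgqint hdom3 pt
      _ = ω ‖y₁ - y₂‖ * (ZV + ∫ z in Z, ‖τ + V₁ z‖^p) := by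
          rw [integral_const_mul, integral_add (integrable_const 1) hintf₁p, hone]
      _ ≤ ω ‖y₁ - y₂‖ * (K * (1 + ‖τ‖^p)) := by
          refine mul_le_mul_of_nonneg_left ?_ hΩ0
          have h1 : ZV ≤ ZV * (1+‖τ‖^p) := le_mul_of_one_le_right hZV0 hT1
          have hre : K * (1+‖τ‖^p) = ZV*(1+‖τ‖^p) + c*(1+‖τ‖^p) := by rw [hKdef]; ring
          linarith [hE₁]
      _ = ω ‖y₁ - y₂‖ * K * (1 + ‖τ‖^p) := (mul_assoc _ _ _).symm
  have hIup2 : (∫ z in Z, ⟪a y₂ z (τ + V₁ z), V₁ z - V₂ z⟫)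
      ≤ (ω ‖y₁ - y₂‖ * K * (1 + ‖τ‖^p))^(1/q) * (∫ z in Z, ‖V₁ z - V₂ z‖^p)^(1/p) := by
    refine hIup.trans (hHold.trans ?_)
    exact mul_le_mul_of_nonneg_right (Real.rpow_le_rpow hgq0 hgqb (by positivity))
      (Real.rpow_nonneg hM0 _)
  -- bound on ∫ S^p
  have hdom4 : Integrable (fun z => (3:ℝ)^p * (1 + ‖τ+V₁ z‖^p + ‖τ+V₂ z‖^p))
      (volume.restrict Z) := (((integrable_const 1).add hintf₁p).add hintf₂p).const_mul _
  have hSpint : Integrable (fun z => (1+‖τ+V₁ z‖+‖τ+V₂ z‖)^p) (volume.restrict Z) := by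
    refine Integrable.mono' hdom4 ((hSaem.pow aemeasurable_const).aestronglyMeasurable) ?_
    filter_upwards with z
    rw [Real.norm_of_nonneg (Real.rpow_nonneg (by positivity) _)]
    exact aux_max3 hp0.le (norm_nonneg _) (norm_nonneg _)
  have hSp0 : (0:ℝ) ≤ ∫ z in Z, (1+‖τ+V₁ z‖+‖τ+V₂ z‖)^p :=
    integral_nonneg fun z => Real.rpow_nonneg (by positivity) _
  have hSpb : (∫ z in Z, (1+‖τ+V₁ z‖+‖τ+V₂ z‖)^p) ≤ K' * (1 + ‖τ‖^p) := by
    have h3p : (0:ℝ) ≤ (3:ℝ)^p := Real.rpow_nonneg (by norm_num) _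
    calc (∫ z in Z, (1+‖τ+V₁ z‖+‖τ+V₂ z‖)^p)
        ≤ ∫ z in Z, (3:ℝ)^p * (1 + ‖τ+V₁ z‖^p + ‖τ+V₂ z‖^p) :=
          integral_mono_ae hSpint hdom4 (Filter.Eventually.of_forall fun z =>
            aux_max3 hp0.le (norm_nonneg _) (norm_nonneg _))
      _ = (3:ℝ)^p * (ZV + (∫ z in Z, ‖τ+V₁ z‖^p) + ∫ z in Z, ‖τ+V₂ z‖^p) := by
          have hi1 : Integrable (fun z => 1 + ‖τ + V₁ z‖^p) (volume.restrict Z) :=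
            (integrable_const 1).add hintf₁p
          rw [integral_const_mul, integral_add hi1 hintf₂p,
            integral_add (integrable_const 1) hintf₁p, hone]
      _ ≤ K' * (1 + ‖τ‖^p) := by
          rw [hK'def, mul_assoc]
          refine mul_le_mul_of_nonneg_left ?_ h3p
          have h1 : ZV ≤ ZV * (1+‖τ‖^p) := le_mul_of_one_le_right hZV0 hT1
          have hre : (ZV+2*c) * (1+‖τ‖^p) = ZV*(1+‖τ‖^p) + c*(1+‖τ‖^p) + c*(1+‖τ‖^p) := by
            ring
          linarith [hE₁, hE₂]
  -- reverse Hölder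
  have hRH : (∫ z in Z, ‖V₁ z - V₂ z‖^p)
      ≤ (∫ z in Z, (1+‖τ+V₁ z‖+‖τ+V₂ z‖)^p) ^ ((β-p)/β)
        * (∫ z in Z, (1+‖τ+V₁ z‖+‖τ+V₂ z‖)^(p-β) * ‖V₁ z - V₂ z‖^β) ^ (p/β) := by
    rcases eq_or_lt_of_le hβp with hbe | hblt
    · rw [← hbe]
      simp only [sub_self, zero_div, Real.rpow_zero, one_mul, div_self hp0.ne',
        Real.rpow_one]
      exact le_refl _
    · have hβp' : (0:ℝ) < β - p := sub_pos.2 hblt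
      have hconj : (β/(β-p)).HolderConjugate (β/p) := by
        refine Real.holderConjugate_iff.mpr ⟨(one_lt_div hβp').2 (by linarith), ?_⟩
        rw [inv_div, inv_div, ← add_div, sub_add_cancel, div_self hβ0.ne']
      have hFm : MemLp (fun z => ((1+‖τ+V₁ z‖+‖τ+V₂ z‖)^p) ^ ((β-p)/β))
          (ENNReal.ofReal (β/(β-p))) (volume.restrict Z) := by
        refine memLp_of_int (by positivity)
          ((hSpint.aestronglyMeasurable.aemeasurable.pow
            aemeasurable_const).aestronglyMeasurable) ?_
        refine hSpint.congr (Filter.Eventually.of_forall fun z => ?_)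
        beta_reduce
        have hS1 : (0:ℝ) ≤ (1+‖τ+V₁ z‖+‖τ+V₂ z‖)^p := Real.rpow_nonneg (by positivity) _
        rw [Real.norm_of_nonneg (Real.rpow_nonneg hS1 _), ← Real.rpow_mul hS1,
          show (β-p)/β * (β/(β-p)) = 1 by field_simp, Real.rpow_one]
      have hGm : MemLp
          (fun z => ((1+‖τ+V₁ z‖+‖τ+V₂ z‖)^(p-β) * ‖V₁ z - V₂ z‖^β) ^ (p/β))
          (ENNReal.ofReal (β/p)) (volume.restrict Z) := by
        refine memLp_of_int (by positivity)
          ((hJint.aestronglyMeasurable.aemeasurable.pow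
            aemeasurable_const).aestronglyMeasurable) ?_
        refine hJint.congr (Filter.Eventually.of_forall fun z => ?_)
        beta_reduce
        have hX1 : (0:ℝ) ≤ (1+‖τ+V₁ z‖+‖τ+V₂ z‖)^(p-β) * ‖V₁ z - V₂ z‖^β :=
          mul_nonneg (Real.rpow_nonneg (by positivity) _)
            (Real.rpow_nonneg (norm_nonneg _) _)
        rw [Real.norm_of_nonneg (Real.rpow_nonneg hX1 _), ← Real.rpow_mul hX1,
          show p/β * (β/p) = 1 by field_simp, Real.rpow_one]
      have hFnn : (0 : EuclideanSpace ℝ (Fin n) → ℝ) ≤ᵐ[volume.restrict Z]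
          (fun z => ((1+‖τ+V₁ z‖+‖τ+V₂ z‖)^p) ^ ((β-p)/β)) :=
        Filter.Eventually.of_forall fun z =>
          Real.rpow_nonneg (Real.rpow_nonneg (by positivity) _) _
      have hGnn : (0 : EuclideanSpace ℝ (Fin n) → ℝ) ≤ᵐ[volume.restrict Z]
          (fun z => ((1+‖τ+V₁ z‖+‖τ+V₂ z‖)^(p-β) * ‖V₁ z - V₂ z‖^β) ^ (p/β)) :=
        Filter.Eventually.of_forall fun z =>
          Real.rpow_nonneg (mul_nonneg (Real.rpow_nonneg (by positivity) _)
            (Real.rpow_nonneg (norm_nonneg _) _)) _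
      have hHold2 := integral_mul_le_Lp_mul_Lq_of_nonneg hconj hFnn hGnn hFm hGm
      have hFG : ∀ z : EuclideanSpace ℝ (Fin n),
          ((1+‖τ+V₁ z‖+‖τ+V₂ z‖)^p) ^ ((β-p)/β)
            * ((1+‖τ+V₁ z‖+‖τ+V₂ z‖)^(p-β) * ‖V₁ z - V₂ z‖^β) ^ (p/β)
          = ‖V₁ z - V₂ z‖^p := by
        intro z
        have hS0 : (0:ℝ) < 1+‖τ+V₁ z‖+‖τ+V₂ z‖ := by positivity
        rw [Real.mul_rpow (Real.rpow_nonneg hS0.le _) (Real.rpow_nonneg (norm_nonneg _) _),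
          ← Real.rpow_mul hS0.le, ← Real.rpow_mul hS0.le,
          ← Real.rpow_mul (norm_nonneg (V₁ z - V₂ z)), ← mul_assoc,
          ← Real.rpow_add hS0,
          show p*((β-p)/β) + (p-β)*(p/β) = 0 by field_simp; ring,
          Real.rpow_zero, one_mul, show β*(p/β) = p by field_simp]
      have eF : (∫ z in Z, (((1+‖τ+V₁ z‖+‖τ+V₂ z‖)^p) ^ ((β-p)/β)) ^ (β/(β-p)))
          = ∫ z in Z, (1+‖τ+V₁ z‖+‖τ+V₂ z‖)^p := by
        refine integral_congr_ae (Filter.Eventually.of_forall fun z => ?_)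
        beta_reduce
        have hS1 : (0:ℝ) ≤ (1+‖τ+V₁ z‖+‖τ+V₂ z‖)^p := Real.rpow_nonneg (by positivity) _
        rw [← Real.rpow_mul hS1, show (β-p)/β * (β/(β-p)) = 1 by field_simp, Real.rpow_one]
      have eG : (∫ z in Z,
            (((1+‖τ+V₁ z‖+‖τ+V₂ z‖)^(p-β) * ‖V₁ z - V₂ z‖^β) ^ (p/β)) ^ (β/p))
          = ∫ z in Z, (1+‖τ+V₁ z‖+‖τ+V₂ z‖)^(p-β) * ‖V₁ z - V₂ z‖^β := by
        refine integral_congr_ae (Filter.Eventually.of_forall fun z => ?_)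
        beta_reduce
        have hX1 : (0:ℝ) ≤ (1+‖τ+V₁ z‖+‖τ+V₂ z‖)^(p-β) * ‖V₁ z - V₂ z‖^β :=
          mul_nonneg (Real.rpow_nonneg (by positivity) _)
            (Real.rpow_nonneg (norm_nonneg _) _)
        rw [← Real.rpow_mul hX1, show p/β * (β/p) = 1 by field_simp, Real.rpow_one]
      have eFG : (∫ z in Z, ((1+‖τ+V₁ z‖+‖τ+V₂ z‖)^p) ^ ((β-p)/β)
            * ((1+‖τ+V₁ z‖+‖τ+V₂ z‖)^(p-β) * ‖V₁ z - V₂ z‖^β) ^ (p/β))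
          = ∫ z in Z, ‖V₁ z - V₂ z‖^p :=
        integral_congr_ae (Filter.Eventually.of_forall hFG)
      rw [eFG, eF, eG, one_div_div, one_div_div] at hHold2
      exact hHold2
  -- assemble
  have hX0 : (0:ℝ) ≤ ω ‖y₁ - y₂‖ * K * (1 + ‖τ‖^p) :=
    mul_nonneg (mul_nonneg hΩ0 hK0.le) hT0.le
  have hstep : (∫ z in Z, ‖V₁ z - V₂ z‖ ^ p)
      ≤ (K'*(1 + ‖τ‖^p))^((β-p)/β)
        * ((((ω ‖y₁ - y₂‖ * K * (1 + ‖τ‖^p))^(1/q)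
            * (∫ z in Z, ‖V₁ z - V₂ z‖^p)^(1/p)) / c₂)^(p/β)) := by
    refine hRH.trans ?_
    have hfac1 : (∫ z in Z, (1+‖τ+V₁ z‖+‖τ+V₂ z‖)^p) ^ ((β-p)/β)
        ≤ (K'*(1 + ‖τ‖^p))^((β-p)/β) :=
      Real.rpow_le_rpow hSp0 hSpb (by positivity)
    have hfac2 : (∫ z in Z, (1+‖τ+V₁ z‖+‖τ+V₂ z‖)^(p-β) * ‖V₁ z - V₂ z‖^β) ^ (p/β)
        ≤ ((((ω ‖y₁ - y₂‖ * K * (1 + ‖τ‖^p))^(1/q)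
            * (∫ z in Z, ‖V₁ z - V₂ z‖^p)^(1/p)) / c₂)^(p/β)) := by
      refine Real.rpow_le_rpow hJ0 ?_ (by positivity)
      refine le_trans ((le_div_iff₀' hc₂).2 hc₂J) ?_
      have hIsub : (∫ z in Z, ⟪a y₂ z (τ + V₁ z) - a y₂ z (τ + V₂ z), V₁ z - V₂ z⟫)
          ≤ (ω ‖y₁ - y₂‖ * K * (1 + ‖τ‖^p))^(1/q)
            * (∫ z in Z, ‖V₁ z - V₂ z‖^p)^(1/p) := by
        rw [hI21]; exact hIup2
      gcongr
    exact mul_le_mul hfac1 hfac2 (Real.rpow_nonneg hJ0 _)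
      (Real.rpow_nonneg (mul_nonneg hK'0.le hT0.le) _)
  have habs : (∫ z in Z, ‖V₁ z - V₂ z‖^p)
      ≤ C₁ * (ω ‖y₁ - y₂‖)^((p-1)/(β-1)) * (1 + ‖τ‖^p) := by
    rcases hM0.eq_or_lt with h0 | hMpos
    · rw [← h0]
      exact mul_nonneg (mul_nonneg hC₁0.le (Real.rpow_nonneg hΩ0 _)) hT0.le
    · have hB0 : (0:ℝ) ≤ (K'*(1 + ‖τ‖^p))^((β-p)/β)
          * (((ω ‖y₁ - y₂‖ * K * (1 + ‖τ‖^p))^(1/q))/c₂)^(p/β) :=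
        mul_nonneg (Real.rpow_nonneg (mul_nonneg hK'0.le hT0.le) _)
          (Real.rpow_nonneg (div_nonneg (Real.rpow_nonneg hX0 _) hc₂.le) _)
      have hMB : (∫ z in Z, ‖V₁ z - V₂ z‖^p)
          ≤ ((K'*(1 + ‖τ‖^p))^((β-p)/β)
              * (((ω ‖y₁ - y₂‖ * K * (1 + ‖τ‖^p))^(1/q))/c₂)^(p/β))
            * (∫ z in Z, ‖V₁ z - V₂ z‖^p)^(1/β) := by
        refine hstep.trans (le_of_eq ?_)
        have h1 : ((ω ‖y₁ - y₂‖ * K * (1 + ‖τ‖^p))^(1/q)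
              * (∫ z in Z, ‖V₁ z - V₂ z‖^p)^(1/p)) / c₂
            = ((ω ‖y₁ - y₂‖ * K * (1 + ‖τ‖^p))^(1/q)/c₂)
              * (∫ z in Z, ‖V₁ z - V₂ z‖^p)^(1/p) := by ring
        rw [h1, Real.mul_rpow (div_nonneg (Real.rpow_nonneg hX0 _) hc₂.le)
            (Real.rpow_nonneg hM0 _),
          ← Real.rpow_mul hM0, show 1/p * (p/β) = 1/β by field_simp]
        ring
      have hpow : (0:ℝ) < (∫ z in Z, ‖V₁ z - V₂ z‖^p)^(1/β) :=
        Real.rpow_pos_of_pos hMpos _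
      have hsplit : (∫ z in Z, ‖V₁ z - V₂ z‖^p)
          = (∫ z in Z, ‖V₁ z - V₂ z‖^p)^((β-1)/β)
            * (∫ z in Z, ‖V₁ z - V₂ z‖^p)^(1/β) := by
        rw [← Real.rpow_add hMpos, show (β-1)/β + 1/β = 1 by field_simp; ring, Real.rpow_one]
      have hMβ : (∫ z in Z, ‖V₁ z - V₂ z‖^p)^((β-1)/β)
          ≤ (K'*(1 + ‖τ‖^p))^((β-p)/β)
            * (((ω ‖y₁ - y₂‖ * K * (1 + ‖τ‖^p))^(1/q))/c₂)^(p/β) := by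
        have h2 := hMB
        nth_rewrite 1 [hsplit] at h2
        exact le_of_mul_le_mul_right h2 hpow
      have hMle : (∫ z in Z, ‖V₁ z - V₂ z‖^p)
          ≤ ((K'*(1 + ‖τ‖^p))^((β-p)/β)
              * (((ω ‖y₁ - y₂‖ * K * (1 + ‖τ‖^p))^(1/q))/c₂)^(p/β)) ^ (β/(β-1)) := by
        have h1 := Real.rpow_le_rpow (Real.rpow_nonneg hM0 _) hMβ
          (by positivity : (0:ℝ) ≤ β/(β-1))
        rwa [← Real.rpow_mul hM0, show (β-1)/β * (β/(β-1)) = 1 by field_simp,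
          Real.rpow_one] at h1
      refine hMle.trans (le_of_eq ?_)
      rw [hC₁def]
      exact aux_alg hp hqinv hβ1 hc₂ hK'0 hK0 hT0 hΩ0
  -- conclusion
  have hfinal := Real.rpow_le_rpow hM0 habs (by positivity : (0:ℝ) ≤ α/(p-1))
  have heq : (C₁ * (ω ‖y₁ - y₂‖)^((p-1)/(β-1)) * (1 + ‖τ‖^p)) ^ (α/(p-1))
      = C₁^(α/(p-1)) * (ω ‖y₁ - y₂‖)^(α/(β-1)) * (1 + ‖τ‖^p)^(α/(p-1)) := by
    rw [Real.mul_rpow (mul_nonneg hC₁0.le (Real.rpow_nonneg hΩ0 _)) hT0.le,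
      Real.mul_rpow hC₁0.le (Real.rpow_nonneg hΩ0 _), ← Real.rpow_mul hΩ0,
      show (p-1)/(β-1) * (α/(p-1)) = α/(β-1) by
        field_simp]
  rw [heq] at hfinal
  simpa [max_eq_left hΩ0] using hfinal
end

section
/- Fix 1 < p < ∞, let Z ⊂ ℝ^n be a bounded open rectangle, and fix y ∈ ℝ^n. Let a : ℝ^n × ℝ^n × ℝ^n → ℝ^n satisfy, for a.e. z ∈ ℝ^n and all ξ, ξ_1, ξ_2 ∈ ℝ^n: a(y,z,0) = 0; |a(y,z,ξ_1) − a(y,z,ξ_2)| ≤ c_1 (1 + |ξ_1| + |ξ_2|)^{p−1−α} |ξ_1 − ξ_2|^α; and (a(y,z,ξ_1) − a(y,z,ξ_2), ξ_1 − ξ_2) ≥ c_2 (1 + |ξ_1| + |ξ_2|)^{p−β} |ξ_1 − ξ_2|^β, with c_1, c_2 > 0, 0 < α ≤ min{1, p−1}, max{p, 2} ≤ β < ∞. Let ξ_1, ξ_2 ∈ ℝ^n and let V_1, V_2 ∈ L^p(Z; ℝ^n) satisfy ∫_Z V_i(z) dz = 0 and the orthogonality relations ∫_Z (a(y, z, ξ_i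 + V_i(z)), V_j(z)) dz = 0 for all i, j ∈ {1,2}. Define b(y, ξ_i) = (1/|Z|) ∫_Z a(y, z, ξ_i + V_i(z)) dz and γ = α/(β − α). Then there exists a constant c > 0, depending only on c_1, c_2, p, α, β and |Z|, such that |b(y, ξ_1) − b(y, ξ_2)| ≤ c (1 + |ξ_1| + |ξ_2|)^{p−1−γ} |ξ_1 − ξ_2|^γ. -/
open MeasureTheory
open scoped RealInnerProductSpace



section Helpers

variable {X : Type*} [MeasurableSpace X] {μ : Measure X}

private lemma aemeas_rpow_of_pos {f : X → ℝ} (hf : AEMeasurable f μ) (hpos : ∀ x, 0 < f x)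
    (c : ℝ) : AEMeasurable (fun x => f x ^ c) μ := by
  have h0 : (fun x => Real.exp (Real.log (hf.mk f x) * c)) =ᵐ[μ] fun x => f x ^ c := by
    filter_upwards [hf.ae_eq_mk] with x hx
    rw [← hx, ← Real.rpow_def_of_pos (hpos x)]
  exact (Real.measurable_exp.comp ((Real.measurable_log.comp hf.measurable_mk).mul_const
    c)).aemeasurable.congr h0

private lemma aemeas_rpow_of_nonneg {f : X → ℝ} (hf : AEMeasurable f μ) {c : ℝ} (hc : 0 ≤ c) :
    AEMeasurable (fun x => f x ^ c) μ :=
  (Real.continuous_rpow_const hc).measurable.comp_aemeasurable hf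

private lemma memLp_of_int_rpow {f : X → ℝ} {r : ℝ} (hr : 0 < r)
    (hf : AEStronglyMeasurable f μ) (h : Integrable (fun x => |f x| ^ r) μ) :
    MemLp f (ENNReal.ofReal r) μ := by
  have hne : ENNReal.ofReal r ≠ 0 := by
    simp only [ne_eq, ENNReal.ofReal_eq_zero, not_le]; exact hr
  refine (memLp_norm_rpow_iff (p := ENNReal.ofReal r) hf hne ENNReal.ofReal_ne_top).mp ?_
  rw [ENNReal.div_self hne ENNReal.ofReal_ne_top, memLp_one_iff_integrable]
  refine h.congr (Filter.Eventually.of_forall fun x => ?_)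
  simp [Real.norm_eq_abs, ENNReal.toReal_ofReal hr.le]

/-- Hölder inequality for integrals, wrapper. -/
private lemma holder_int {f g : X → ℝ} {r s : ℝ} (hr : 1 < r) (hrs : r⁻¹ + s⁻¹ = 1)
    (hf0 : ∀ x, 0 ≤ f x) (hg0 : ∀ x, 0 ≤ g x)
    (hfm : AEMeasurable f μ) (hgm : AEMeasurable g μ)
    (hfr : Integrable (fun x => f x ^ r) μ) (hgs : Integrable (fun x => g x ^ s) μ) :
    ∫ x, f x * g x ∂μ ≤ (∫ x, f x ^ r ∂μ) ^ (1/r) * (∫ x, g x ^ s ∂μ) ^ (1/s) := by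
  have hconj : Real.HolderConjugate r s := Real.holderConjugate_iff.mpr ⟨hr, hrs⟩
  refine integral_mul_le_Lp_mul_Lq_of_nonneg hconj (Filter.Eventually.of_forall hf0)
    (Filter.Eventually.of_forall hg0) ?_ ?_
  · refine memLp_of_int_rpow hconj.left_pos hfm.aestronglyMeasurable
      (hfr.congr (Filter.Eventually.of_forall fun x => ?_))
    simp [abs_of_nonneg (hf0 x)]
  · refine memLp_of_int_rpow hconj.right_pos hgm.aestronglyMeasurable
      (hgs.congr (Filter.Eventually.of_forall fun x => ?_))
    simp [abs_of_nonneg (hg0 x)]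

/-- `(x+y)^p ≤ 2^p (x^p + y^p)` for nonneg `x, y` and `0 ≤ p`. -/
private lemma add_rpow_le (x y p : ℝ) (hx : 0 ≤ x) (hy : 0 ≤ y) (hp : 0 ≤ p) :
    (x + y) ^ p ≤ 2 ^ p * (x ^ p + y ^ p) := by
  have h1 : x + y ≤ 2 * max x y := by
    rcases le_total x y with h | h
    · calc x + y ≤ y + y := by linarith
        _ = 2 * max x y := by rw [max_eq_right h]; ring
    · calc x + y ≤ x + x := by linarith
        _ = 2 * max x y := by rw [max_eq_left h]; ring
  calc (x + y) ^ p ≤ (2 * max x y) ^ p :=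
        Real.rpow_le_rpow (by linarith) h1 hp
    _ = 2 ^ p * (max x y) ^ p := Real.mul_rpow (by norm_num) (le_max_of_le_left hx)
    _ ≤ 2 ^ p * (x ^ p + y ^ p) := by
        refine mul_le_mul_of_nonneg_left ?_ (Real.rpow_nonneg (by norm_num) p)
        rcases le_total x y with h | h
        · rw [max_eq_right h]
          exact le_add_of_nonneg_left (Real.rpow_nonneg hx p)
        · rw [max_eq_left h]
          exact le_add_of_nonneg_right (Real.rpow_nonneg hy p)

/-- key pointwise lower bound: `2^(p-β) ((1+t)^p 2^(-p) - 1) ≤ (1+t)^(p-β) t^β`. -/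
private lemma pointwise_lower {p β : ℝ} (hp : 0 < p) (hβ : 0 ≤ β) (hpβ : p ≤ β) {t : ℝ}
    (ht : 0 ≤ t) :
    2 ^ (p - β) * ((1 + t) ^ p * 2 ^ (-p) - 1) ≤ (1 + t) ^ (p - β) * t ^ β := by
  have h1t : (0:ℝ) < 1 + t := by linarith
  rcases le_total t 1 with h | h
  · have hle : (1 + t) ^ p ≤ 2 ^ p := Real.rpow_le_rpow h1t.le (by linarith) hp.le
    have h2 : (1 + t) ^ p * 2 ^ (-p) ≤ 1 := by
      rw [Real.rpow_neg (by norm_num : (0:ℝ) ≤ 2)]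
      rw [mul_inv_le_iff₀ (Real.rpow_pos_of_pos (by norm_num) p), one_mul]
      exact hle
    have : 2 ^ (p - β) * ((1 + t) ^ p * 2 ^ (-p) - 1) ≤ 0 :=
      mul_nonpos_of_nonneg_of_nonpos (Real.rpow_nonneg (by norm_num) _) (by linarith)
    exact this.trans (mul_nonneg (Real.rpow_nonneg h1t.le _) (Real.rpow_nonneg ht _))
  · have htpos : (0:ℝ) < t := by linarith
    have h2t : 1 + t ≤ 2 * t := by linarith
    have hA : (2 * t) ^ (p - β) ≤ (1 + t) ^ (p - β) :=
      Real.rpow_le_rpow_of_nonpos h1t h2t (by linarith)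
    have hB : (2 * t) ^ (p - β) * t ^ β = 2 ^ (p - β) * t ^ p := by
      rw [Real.mul_rpow (by norm_num) htpos.le, mul_assoc, ← Real.rpow_add htpos]
      ring_nf
    have hC : (1 + t) ^ p * 2 ^ (-p) ≤ t ^ p := by
      have : (1 + t) ^ p ≤ (2 * t) ^ p := Real.rpow_le_rpow h1t.le h2t hp.le
      rw [Real.mul_rpow (by norm_num) htpos.le] at this
      rw [Real.rpow_neg (by norm_num : (0:ℝ) ≤ 2)]
      rw [mul_inv_le_iff₀ (Real.rpow_pos_of_pos (by norm_num) p)]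
      linarith
    calc 2 ^ (p - β) * ((1 + t) ^ p * 2 ^ (-p) - 1)
        ≤ 2 ^ (p - β) * t ^ p := by
          refine mul_le_mul_of_nonneg_left ?_ (Real.rpow_nonneg (by norm_num) _)
          linarith
      _ = (2 * t) ^ (p - β) * t ^ β := hB.symm
      _ ≤ (1 + t) ^ (p - β) * t ^ β :=
          mul_le_mul_of_nonneg_right hA (Real.rpow_nonneg ht _)

end Helpers

section Energy

variable {X : Type*} [MeasurableSpace X] {μ : Measure X}
variable {E : Type*} [NormedAddCommGroup E] [InnerProductSpace ℝ E] [CompleteSpace E]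

/-- Energy estimate: `∫ (1+‖w‖)^p ≤ (4 + 2 c₁ 2^β / c₂)^p m (1+‖ξ‖)^p`. -/
private lemma energy_est [IsFiniteMeasure μ] {p c₁ c₂ β : ℝ} (hp : 1 < p) (hc₁ : 0 < c₁)
    (hc₂ : 0 < c₂) (hpβ : p ≤ β) {w A : X → E} {ξ : E}
    (hwm : MemLp w (ENNReal.ofReal p) μ)
    (hA : Integrable A μ)
    (hgrow : ∀ᵐ z ∂μ, ‖A z‖ ≤ c₁ * (1 + ‖w z‖) ^ (p - 1))
    (hmono : ∀ᵐ z ∂μ, c₂ * ((1 + ‖w z‖) ^ (p - β) * ‖w z‖ ^ β) ≤ ⟪A z, w z⟫)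
    (hAw : Integrable (fun z => ⟪A z, w z⟫) μ)
    (hkey : (∫ z, ⟪A z, w z⟫ ∂μ) = ⟪∫ z, A z ∂μ, ξ⟫) :
    ∫ z, (1 + ‖w z‖) ^ p ∂μ ≤
      (4 + 2 * (c₁ * 2 ^ β / c₂)) ^ p * (μ Set.univ).toReal * (1 + ‖ξ‖) ^ p := by
  have hp0 : (0:ℝ) < p := by linarith
  set m : ℝ := (μ Set.univ).toReal with hm_def
  have hm0 : 0 ≤ m := ENNReal.toReal_nonneg
  set ω : X → ℝ := fun z => 1 + ‖w z‖ with hω_def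
  have hω1 : ∀ z, (1:ℝ) ≤ ω z := fun z => by
    simp only [hω_def]; have := norm_nonneg (w z); linarith
  have hωpos : ∀ z, (0:ℝ) < ω z := fun z => lt_of_lt_of_le one_pos (hω1 z)
  have hωm : AEMeasurable ω μ := aemeasurable_const.add hwm.1.norm.aemeasurable
  -- integrability of ω^p
  have hωLp : MemLp ω (ENNReal.ofReal p) μ := (memLp_const (1:ℝ)).add hwm.norm
  have hωp_int : Integrable (fun z => ω z ^ p) μ := by
    have := hωLp.integrable_norm_rpow (by simp [hp0, hp0.not_gt]) ENNReal.ofReal_ne_top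
    refine this.congr (Filter.Eventually.of_forall fun z => ?_)
    show ‖ω z‖ ^ (ENNReal.ofReal p).toReal = ω z ^ p
    rw [ENNReal.toReal_ofReal hp0.le, Real.norm_of_nonneg (hωpos z).le]
  set P : ℝ := ∫ z, ω z ^ p ∂μ with hP_def
  have hP0 : 0 ≤ P := integral_nonneg fun z => Real.rpow_nonneg (hωpos z).le p
  set u : ℝ := P ^ (1/p) with hu_def
  have hu0 : 0 ≤ u := Real.rpow_nonneg hP0 _
  have huP : u ^ p = P := by
    rw [hu_def, ← Real.rpow_mul hP0, one_div, inv_mul_cancel₀ hp0.ne', Real.rpow_one]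
  -- integrability of ω^(p-1)
  have hωp1_int : Integrable (fun z => ω z ^ (p - 1)) μ := by
    refine hωp_int.mono' (aemeas_rpow_of_pos hωm hωpos (p-1)).aestronglyMeasurable
      (Filter.Eventually.of_forall fun z => ?_)
    show ‖ω z ^ (p-1)‖ ≤ ω z ^ p
    rw [Real.norm_of_nonneg (Real.rpow_nonneg (hωpos z).le _)]
    exact Real.rpow_le_rpow_of_exponent_le (hω1 z) (by linarith)
  -- step: lower bound on ∫⟪A,w⟫
  have hlow_int : Integrable (fun z => c₂ * (ω z ^ (p - β) * ‖w z‖ ^ β)) μ := by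
    refine hAw.mono' ?_ ?_
    · exact (((aemeas_rpow_of_pos hωm hωpos (p-β)).mul
        (aemeas_rpow_of_nonneg hwm.1.norm.aemeasurable (by linarith : (0:ℝ) ≤ β))).const_mul
          c₂).aestronglyMeasurable
    · filter_upwards [hmono] with z hz
      show ‖c₂ * (ω z ^ (p - β) * ‖w z‖ ^ β)‖ ≤ ⟪A z, w z⟫
      rw [Real.norm_of_nonneg (by positivity)]
      exact hz
  have hS1 : ∫ z, c₂ * (ω z ^ (p - β) * ‖w z‖ ^ β) ∂μ ≤ ∫ z, ⟪A z, w z⟫ ∂μ :=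
    integral_mono_ae hlow_int hAw hmono
  -- step: pointwise lower bound integrated
  have hlow2 : c₂ * (2 ^ (p - β) * (2 ^ (-p) * P - m)) ≤ ∫ z, c₂ * (ω z ^ (p-β) * ‖w z‖ ^ β) ∂μ := by
    have hpt : ∀ z, 2 ^ (p - β) * (ω z ^ p * 2 ^ (-p) - 1) ≤ ω z ^ (p - β) * ‖w z‖ ^ β :=
      fun z => pointwise_lower hp0 (by linarith) hpβ (norm_nonneg (w z))
    have hint2 : Integrable (fun z => 2 ^ (p-β) * (ω z ^ p * 2 ^ (-p) - 1)) μ :=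
      (((hωp_int.mul_const _).sub (integrable_const 1)).const_mul _)
    have := integral_mono_ae hint2 (by
        refine hlow_int.const_mul c₂⁻¹ |>.congr (Filter.Eventually.of_forall fun z => ?_)
        field_simp) (Filter.Eventually.of_forall hpt)
    calc c₂ * (2 ^ (p - β) * (2 ^ (-p) * P - m))
        = c₂ * ∫ z, 2 ^ (p-β) * (ω z ^ p * 2 ^ (-p) - 1) ∂μ := by
          rw [integral_const_mul, integral_sub (hωp_int.mul_const _) (integrable_const 1),
            integral_mul_const, integral_const]
          simp only [smul_eq_mul, mul_one, ← hP_def, measureReal_def, ← hm_def]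
          ring
      _ ≤ c₂ * ∫ z, ω z ^ (p-β) * ‖w z‖ ^ β ∂μ := by
          refine mul_le_mul_of_nonneg_left ?_ hc₂.le
          exact this
      _ = ∫ z, c₂ * (ω z ^ (p-β) * ‖w z‖ ^ β) ∂μ := (integral_const_mul _ _).symm
  -- step: upper bound
  have hup : (∫ z, ⟪A z, w z⟫ ∂μ) ≤ c₁ * ‖ξ‖ * (u ^ (p-1) * m ^ (1/p)) := by
    have h1 : (∫ z, ⟪A z, w z⟫ ∂μ) ≤ ‖∫ z, A z ∂μ‖ * ‖ξ‖ := by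
      rw [hkey]; exact real_inner_le_norm _ _
    have h2 : ‖∫ z, A z ∂μ‖ ≤ ∫ z, ‖A z‖ ∂μ := norm_integral_le_integral_norm _
    have h3 : (∫ z, ‖A z‖ ∂μ) ≤ c₁ * ∫ z, ω z ^ (p-1) ∂μ := by
      rw [← integral_const_mul]
      exact integral_mono_ae hA.norm (hωp1_int.const_mul c₁) hgrow
    -- Hölder for ∫ ω^(p-1)
    have h4 : (∫ z, ω z ^ (p-1) ∂μ) ≤ u ^ (p-1) * m ^ (1/p) := by
      have hr1 : 1 < p / (p-1) := by
        rw [lt_div_iff₀ (by linarith)]; linarith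
      have hp1ne : p - 1 ≠ 0 := by linarith
      have hconj : (p/(p-1))⁻¹ + p⁻¹ = 1 := by field_simp; ring
      have hcanc : (p-1) * (p/(p-1)) = p := by field_simp
      have hfr : Integrable (fun z => (ω z ^ (p-1)) ^ (p/(p-1))) μ := by
        refine hωp_int.congr (Filter.Eventually.of_forall fun z => ?_)
        show ω z ^ p = (ω z ^ (p-1)) ^ (p/(p-1))
        rw [← Real.rpow_mul (hωpos z).le, hcanc]
      have hgs : Integrable (fun z => (1:ℝ) ^ p) μ := by
        simpa [Real.one_rpow] using (integrable_const (1:ℝ) (μ := μ))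
      have := holder_int hr1 hconj (fun z => Real.rpow_nonneg (hωpos z).le _)
        (fun _ => zero_le_one) (aemeas_rpow_of_pos hωm hωpos (p-1)) aemeasurable_const hfr hgs
      simp only [mul_one, Real.one_rpow, integral_const, smul_eq_mul] at this
      calc (∫ z, ω z ^ (p-1) ∂μ)
          ≤ (∫ z, (ω z ^ (p-1)) ^ (p/(p-1)) ∂μ) ^ (1/(p/(p-1))) * ((μ Set.univ).toReal) ^ (1/p) := this
        _ = u ^ (p-1) * m ^ (1/p) := by
            congr 1
            have he : ∀ z, (ω z ^ (p-1)) ^ (p/(p-1)) = ω z ^ p := fun z => by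
              rw [← Real.rpow_mul (hωpos z).le, hcanc]
            have hcanc2 : 1/p * (p-1) = 1/(p/(p-1)) := by
              field_simp
            rw [integral_congr_ae (Filter.Eventually.of_forall he), ← hP_def, hu_def,
              ← Real.rpow_mul hP0, hcanc2]
    calc (∫ z, ⟪A z, w z⟫ ∂μ) ≤ ‖∫ z, A z ∂μ‖ * ‖ξ‖ := h1
      _ ≤ (∫ z, ‖A z‖ ∂μ) * ‖ξ‖ := mul_le_mul_of_nonneg_right h2 (norm_nonneg ξ)
      _ ≤ (c₁ * ∫ z, ω z ^ (p-1) ∂μ) * ‖ξ‖ := mul_le_mul_of_nonneg_right h3 (norm_nonneg ξ)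
      _ ≤ (c₁ * (u ^ (p-1) * m ^ (1/p))) * ‖ξ‖ := by
          refine mul_le_mul_of_nonneg_right (mul_le_mul_of_nonneg_left h4 hc₁.le) (norm_nonneg ξ)
      _ = c₁ * ‖ξ‖ * (u ^ (p-1) * m ^ (1/p)) := by ring
  -- combine:  c₂ 2^(p-β) (2^(-p) P - m) ≤ c₁ ‖ξ‖ u^(p-1) m^(1/p)
  have hcomb : c₂ * (2 ^ (p-β) * (2 ^ (-p) * P - m)) ≤ c₁ * ‖ξ‖ * (u ^ (p-1) * m ^ (1/p)) :=
    le_trans (le_trans hlow2 hS1) hup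
  -- P ≤ 2^p m + K ‖ξ‖ m^(1/p) u^(p-1)
  set K : ℝ := c₁ * 2 ^ β / c₂ with hK_def
  have hK0 : 0 ≤ K := by positivity
  have hP_le : P ≤ 2 ^ p * m + K * ‖ξ‖ * m ^ (1/p) * u ^ (p-1) := by
    have h2b : (0:ℝ) < 2 ^ (p - β) := Real.rpow_pos_of_pos (by norm_num) _
    have h2p : (0:ℝ) < 2 ^ (-p) := Real.rpow_pos_of_pos (by norm_num) _
    have hexp : (2:ℝ) ^ (p-β) * 2 ^ (-p) = 2 ^ (-β) := by
      rw [← Real.rpow_add (by norm_num)]; ring_nf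
    have hexp2 : (2:ℝ) ^ (-β) * 2 ^ β = 1 := by
      rw [← Real.rpow_add (by norm_num)]; simp
    -- from hcomb: c₂ 2^(-β) P ≤ c₂ 2^(p-β) m + c₁‖ξ‖ u^(p-1) m^(1/p)
    have step : c₂ * 2 ^ (-β) * P ≤ c₂ * 2 ^ (p-β) * m + c₁ * ‖ξ‖ * (u ^ (p-1) * m ^ (1/p)) := by
      have e : c₂ * (2 ^ (p-β) * (2 ^ (-p) * P - m)) = c₂ * 2 ^ (-β) * P - c₂ * 2 ^ (p-β) * m := by
        rw [← hexp]; ring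
      linarith [e ▸ hcomb]
    have h2β : (0:ℝ) < 2 ^ (-β) := Real.rpow_pos_of_pos (by norm_num) _
    rw [← mul_le_mul_iff_right₀ (show (0:ℝ) < c₂ * 2 ^ (-β) by positivity)]
    calc c₂ * 2 ^ (-β) * P ≤ c₂ * 2 ^ (p-β) * m + c₁ * ‖ξ‖ * (u ^ (p-1) * m ^ (1/p)) := step
      _ = c₂ * 2 ^ (-β) * (2 ^ p * m) + c₁ * ‖ξ‖ * (u ^ (p-1) * m ^ (1/p)) := by
          have e2 : (2:ℝ) ^ (p-β) = 2 ^ p * 2 ^ (-β) := by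
            rw [← Real.rpow_add (by norm_num : (0:ℝ) < 2)]; ring_nf
          rw [e2]; ring
      _ ≤ c₂ * 2 ^ (-β) * (2 ^ p * m) + c₂ * 2 ^ (-β) * (K * ‖ξ‖ * m ^ (1/p) * u ^ (p-1)) := by
          have : c₂ * 2 ^ (-β) * (K * ‖ξ‖ * m ^ (1/p) * u ^ (p-1))
              = c₁ * ‖ξ‖ * (u ^ (p-1) * m ^ (1/p)) * (2 ^ (-β) * 2 ^ β) := by
            rw [hK_def]; field_simp
          rw [this, hexp2, mul_one]
      _ = c₂ * 2 ^ (-β) * (2 ^ p * m + K * ‖ξ‖ * m ^ (1/p) * u ^ (p-1)) := by ring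
  -- conclude  P ≤ (4+2K)^p m (1+‖ξ‖)^p
  have target_nonneg : 0 ≤ (4 + 2*K) ^ p * m * (1 + ‖ξ‖) ^ p := by positivity
  have hfinal : P ≤ (4 + 2*K) ^ p * m * (1 + ‖ξ‖) ^ p := by
    rcases le_total (K * ‖ξ‖ * m ^ (1/p) * u ^ (p-1)) (2 ^ p * m) with hcase | hcase
    · -- P ≤ 2^(p+1) m ≤ 4^p m ≤ target
      have h1 : P ≤ 2 ^ (p+1) * m := by
        have : P ≤ 2 ^ p * m + 2 ^ p * m := by linarith
        rw [Real.rpow_add (by norm_num), Real.rpow_one]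
        linarith
      have e0 : (2:ℝ) ^ (2:ℝ) = 4 := by
        rw [show ((2:ℝ):ℝ) ^ ((2:ℝ):ℝ) = (2:ℝ) ^ ((2:ℕ):ℝ) by norm_num, Real.rpow_natCast]
        norm_num
      have h2 : (2:ℝ) ^ (p+1) ≤ (4 + 2*K) ^ p := by
        calc (2:ℝ) ^ (p+1) ≤ 2 ^ ((2:ℝ)*p) := by
              refine Real.rpow_le_rpow_of_exponent_le (by norm_num) (by linarith)
          _ = 4 ^ p := by rw [Real.rpow_mul (by norm_num : (0:ℝ) ≤ 2), e0]
          _ ≤ (4 + 2*K) ^ p := Real.rpow_le_rpow (by norm_num) (by linarith) hp0.le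
      calc P ≤ 2 ^ (p+1) * m := h1
        _ ≤ (4 + 2*K) ^ p * m := mul_le_mul_of_nonneg_right h2 hm0
        _ ≤ (4 + 2*K) ^ p * m * (1 + ‖ξ‖) ^ p := by
            have h1le : (1:ℝ) ≤ (1 + ‖ξ‖) ^ p := by
              calc (1:ℝ) = 1 ^ p := (Real.one_rpow p).symm
                _ ≤ (1 + ‖ξ‖) ^ p := Real.rpow_le_rpow zero_le_one
                    (by linarith [norm_nonneg ξ]) hp0.le
            exact le_mul_of_one_le_right (by positivity) h1le
    · -- P ≤ 2 K ‖ξ‖ m^(1/p) u^(p-1)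
      rcases eq_or_lt_of_le hP0 with hPz | hPz
      · exact le_trans (le_of_eq hPz.symm) target_nonneg
      have hu_pos : 0 < u := Real.rpow_pos_of_pos hPz _
      have hup1_pos : 0 < u ^ (p-1) := Real.rpow_pos_of_pos hu_pos _
      have hu_le : u ≤ 2 * (K * ‖ξ‖ * m ^ (1/p)) := by
        have h5 : u ^ p ≤ 2 * (K * ‖ξ‖ * m ^ (1/p)) * u ^ (p-1) := by
          rw [huP]; linarith [hP_le, hcase]
        have h6 : u ^ p = u ^ (p-1) * u := by
          rw [← Real.rpow_add_one hu_pos.ne' (p-1)]; ring_nf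
        rw [h6, mul_comm (2 * (K * ‖ξ‖ * m ^ (1/p))) (u ^ (p-1))] at h5
        exact le_of_mul_le_mul_left h5 hup1_pos
      have : P ≤ (2 * (K * ‖ξ‖ * m ^ (1/p))) ^ p := by
        rw [← huP]; exact Real.rpow_le_rpow hu0 hu_le hp0.le
      calc P ≤ (2 * (K * ‖ξ‖ * m ^ (1/p))) ^ p := this
        _ = (2 * K * ‖ξ‖) ^ p * m := by
            rw [show 2 * (K * ‖ξ‖ * m ^ (1/p)) = (2 * K * ‖ξ‖) * m ^ (1/p) by ring,
              Real.mul_rpow (by positivity) (Real.rpow_nonneg hm0 _),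
              ← Real.rpow_mul hm0]
            rw [one_div, inv_mul_cancel₀ hp0.ne', Real.rpow_one]
        _ ≤ (4 + 2*K) ^ p * (1 + ‖ξ‖) ^ p * m := by
            refine mul_le_mul_of_nonneg_right ?_ hm0
            rw [← Real.mul_rpow (by positivity) (by positivity)]
            refine Real.rpow_le_rpow (by positivity) ?_ hp0.le
            nlinarith [norm_nonneg ξ, hK0]
        _ = (4 + 2*K) ^ p * m * (1 + ‖ξ‖) ^ p := by ring
  calc (∫ z, (1 + ‖w z‖) ^ p ∂μ) = P := rfl
    _ ≤ (4 + 2*K) ^ p * m * (1 + ‖ξ‖) ^ p := hfinal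
    _ = (4 + 2 * (c₁ * 2 ^ β / c₂)) ^ p * m * (1 + ‖ξ‖) ^ p := by rw [hK_def]

end Energy

section MainEst

variable {X : Type*} [MeasurableSpace X] {μ : Measure X}
variable {E : Type*} [NormedAddCommGroup E] [InnerProductSpace ℝ E] [CompleteSpace E]

private lemma int_one_add_rpow [IsFiniteMeasure μ] {f : X → E} {p : ℝ} (hp0 : 0 < p)
    (hf : MemLp f (ENNReal.ofReal p) μ) {e : ℝ} (he : e ≤ p) :
    Integrable (fun z => (1 + ‖f z‖) ^ e) μ := by
  have hωpos : ∀ z, (0:ℝ) < 1 + ‖f z‖ := fun z => by have := norm_nonneg (f z); linarith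
  have hω1 : ∀ z, (1:ℝ) ≤ 1 + ‖f z‖ := fun z => by have := norm_nonneg (f z); linarith
  have hωm : AEMeasurable (fun z => 1 + ‖f z‖) μ := aemeasurable_const.add hf.1.norm.aemeasurable
  have hωLp : MemLp (fun z => 1 + ‖f z‖) (ENNReal.ofReal p) μ := (memLp_const (1:ℝ)).add hf.norm
  have hωp_int : Integrable (fun z => (1 + ‖f z‖) ^ p) μ := by
    have := hωLp.integrable_norm_rpow (by simp [hp0, hp0.not_gt]) ENNReal.ofReal_ne_top
    refine this.congr (Filter.Eventually.of_forall fun z => ?_)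
    show ‖1 + ‖f z‖‖ ^ (ENNReal.ofReal p).toReal = (1 + ‖f z‖) ^ p
    rw [ENNReal.toReal_ofReal hp0.le, Real.norm_of_nonneg (hωpos z).le]
  refine hωp_int.mono' (aemeas_rpow_of_pos hωm hωpos e).aestronglyMeasurable
    (Filter.Eventually.of_forall fun z => ?_)
  show ‖(1 + ‖f z‖) ^ e‖ ≤ (1 + ‖f z‖) ^ p
  rw [Real.norm_of_nonneg (Real.rpow_nonneg (hωpos z).le _)]
  exact Real.rpow_le_rpow_of_exponent_le (hω1 z) he

private lemma main_est [IsFiniteMeasure μ]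
    {p c₁ c₂ α β : ℝ} (hp : 1 < p) (hc₁ : 0 < c₁) (hc₂ : 0 < c₂)
    (hα0 : 0 < α) (hα1 : α ≤ 1) (hαp : α ≤ p - 1) (hβp : p ≤ β) (hβ2 : 2 ≤ β)
    {ξ₁ ξ₂ : E} {w₁ w₂ A₁ A₂ : X → E}
    (hw₁m : MemLp w₁ (ENNReal.ofReal p) μ) (hw₂m : MemLp w₂ (ENNReal.ofReal p) μ)
    (hA₁ : Integrable A₁ μ) (hA₂ : Integrable A₂ μ)
    (hgrow12 : ∀ᵐ z ∂μ, ‖A₁ z - A₂ z‖ ≤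
      c₁ * ((1 + ‖w₁ z‖ + ‖w₂ z‖) ^ (p - 1 - α) * ‖w₁ z - w₂ z‖ ^ α))
    (hgrow₁ : ∀ᵐ z ∂μ, ‖A₁ z‖ ≤ c₁ * (1 + ‖w₁ z‖) ^ (p - 1))
    (hgrow₂ : ∀ᵐ z ∂μ, ‖A₂ z‖ ≤ c₁ * (1 + ‖w₂ z‖) ^ (p - 1))
    (hmono12 : ∀ᵐ z ∂μ, c₂ * ((1 + ‖w₁ z‖ + ‖w₂ z‖) ^ (p - β) * ‖w₁ z - w₂ z‖ ^ β) ≤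
      ⟪A₁ z - A₂ z, w₁ z - w₂ z⟫)
    (hmono₁ : ∀ᵐ z ∂μ, c₂ * ((1 + ‖w₁ z‖) ^ (p - β) * ‖w₁ z‖ ^ β) ≤ ⟪A₁ z, w₁ z⟫)
    (hmono₂ : ∀ᵐ z ∂μ, c₂ * ((1 + ‖w₂ z‖) ^ (p - β) * ‖w₂ z‖ ^ β) ≤ ⟪A₂ z, w₂ z⟫)
    (hAw11 : Integrable (fun z => ⟪A₁ z, w₁ z⟫) μ)
    (hAw12 : Integrable (fun z => ⟪A₁ z, w₂ z⟫) μ)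
    (hAw21 : Integrable (fun z => ⟪A₂ z, w₁ z⟫) μ)
    (hAw22 : Integrable (fun z => ⟪A₂ z, w₂ z⟫) μ)
    (hkey11 : (∫ z, ⟪A₁ z, w₁ z⟫ ∂μ) = ⟪∫ z, A₁ z ∂μ, ξ₁⟫)
    (hkey12 : (∫ z, ⟪A₁ z, w₂ z⟫ ∂μ) = ⟪∫ z, A₁ z ∂μ, ξ₂⟫)
    (hkey21 : (∫ z, ⟪A₂ z, w₁ z⟫ ∂μ) = ⟪∫ z, A₂ z ∂μ, ξ₁⟫)
    (hkey22 : (∫ z, ⟪A₂ z, w₂ z⟫ ∂μ) = ⟪∫ z, A₂ z ∂μ, ξ₂⟫) :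
    ‖(∫ z, A₁ z ∂μ) - ∫ z, A₂ z ∂μ‖ ≤
      c₁ ^ (β/(β-α)) * c₂ ^ (-(α/(β-α))) *
        (2 ^ (p+1) * (4 + 2 * (c₁ * 2 ^ β / c₂)) ^ p) ^ ((((p-1)*β - p*α)/(β-α))/p) *
        (μ Set.univ).toReal *
        (1 + ‖ξ₁‖ + ‖ξ₂‖) ^ (((p-1)*β - p*α)/(β-α)) * ‖ξ₁ - ξ₂‖ ^ (α/(β-α)) := by
  have hp0 : (0:ℝ) < p := by linarith
  have hβ0 : (0:ℝ) < β := by linarith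
  have hβα : (0:ℝ) < β - α := by linarith
  have hαβ : α < β := by linarith
  set γ : ℝ := α/(β-α) with hγdef
  have hγ0 : 0 < γ := div_pos hα0 hβα
  set q : ℝ := ((p-1)*β - p*α)/(β-α) with hqdef
  have hq0 : 0 ≤ q := by
    apply div_nonneg _ hβα.le
    nlinarith
  have hqp : q < p := by
    rw [div_lt_iff₀ hβα]; nlinarith
  set m : ℝ := (μ Set.univ).toReal with hmdef
  have hm0 : 0 ≤ m := ENNReal.toReal_nonneg
  set CE : ℝ := (4 + 2 * (c₁ * 2 ^ β / c₂)) ^ p with hCEdef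
  have hCE0 : 0 < CE := Real.rpow_pos_of_pos (by positivity) _
  set R : ℝ := 1 + ‖ξ₁‖ + ‖ξ₂‖ with hRdef
  have hR1 : (1:ℝ) ≤ R := by
    have := norm_nonneg ξ₁; have := norm_nonneg ξ₂; simp only [hRdef]; linarith
  have hR0 : (0:ℝ) < R := lt_of_lt_of_le one_pos hR1
  set G : ℝ := ‖ξ₁ - ξ₂‖ with hGdef
  have hG0 : 0 ≤ G := norm_nonneg _
  set θ : X → ℝ := fun z => 1 + ‖w₁ z‖ + ‖w₂ z‖ with hθdef
  set δ : X → ℝ := fun z => ‖w₁ z - w₂ z‖ with hδdef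
  have hθ1 : ∀ z, (1:ℝ) ≤ θ z := fun z => by
    have := norm_nonneg (w₁ z); have := norm_nonneg (w₂ z); simp only [hθdef]; linarith
  have hθpos : ∀ z, (0:ℝ) < θ z := fun z => lt_of_lt_of_le one_pos (hθ1 z)
  have hδ0 : ∀ z, (0:ℝ) ≤ δ z := fun z => norm_nonneg _
  have hδθ : ∀ z, δ z ≤ θ z := fun z => by
    have h := norm_sub_le (w₁ z) (w₂ z); simp only [hθdef, hδdef]; linarith
  have hθm : AEMeasurable θ μ :=
    (aemeasurable_const.add hw₁m.1.norm.aemeasurable).add hw₂m.1.norm.aemeasurable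
  have hδm : AEMeasurable δ μ := (hw₁m.1.sub hw₂m.1).norm.aemeasurable
  -- energy estimates
  have hE₁ := energy_est hp hc₁ hc₂ hβp hw₁m hA₁ hgrow₁ hmono₁ hAw11 hkey11
  have hE₂ := energy_est hp hc₁ hc₂ hβp hw₂m hA₂ hgrow₂ hmono₂ hAw22 hkey22
  -- integral of θ^p
  have hω₁p : Integrable (fun z => (1 + ‖w₁ z‖) ^ p) μ := int_one_add_rpow hp0 hw₁m le_rfl
  have hω₂p : Integrable (fun z => (1 + ‖w₂ z‖) ^ p) μ := int_one_add_rpow hp0 hw₂m le_rfl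
  have hθbound : ∀ z, θ z ^ p ≤ 2 ^ p * ((1 + ‖w₁ z‖) ^ p + (1 + ‖w₂ z‖) ^ p) := by
    intro z
    have h1 : θ z ≤ (1 + ‖w₁ z‖) + (1 + ‖w₂ z‖) := by
      simp only [hθdef]; linarith
    calc θ z ^ p ≤ ((1 + ‖w₁ z‖) + (1 + ‖w₂ z‖)) ^ p :=
          Real.rpow_le_rpow (hθpos z).le h1 hp0.le
      _ ≤ 2 ^ p * ((1 + ‖w₁ z‖) ^ p + (1 + ‖w₂ z‖) ^ p) :=
          add_rpow_le _ _ p (by positivity) (by positivity) hp0.le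
  have hθp_int : Integrable (fun z => θ z ^ p) μ := by
    refine ((hω₁p.add hω₂p).const_mul (2 ^ p)).mono'
      (aemeas_rpow_of_pos hθm hθpos p).aestronglyMeasurable
      (Filter.Eventually.of_forall fun z => ?_)
    show ‖θ z ^ p‖ ≤ 2 ^ p * ((1 + ‖w₁ z‖) ^ p + (1 + ‖w₂ z‖) ^ p)
    rw [Real.norm_of_nonneg (Real.rpow_nonneg (hθpos z).le _)]
    exact hθbound z
  set Pθ : ℝ := ∫ z, θ z ^ p ∂μ with hPθdef
  have hPθ0 : 0 ≤ Pθ := integral_nonneg fun z => Real.rpow_nonneg (hθpos z).le _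
  have hPθ_le : Pθ ≤ 2 ^ (p+1) * CE * m * R ^ p := by
    have step1 : Pθ ≤ ∫ z, 2 ^ p * ((1 + ‖w₁ z‖) ^ p + (1 + ‖w₂ z‖) ^ p) ∂μ :=
      integral_mono_ae hθp_int ((hω₁p.add hω₂p).const_mul (2^p))
        (Filter.Eventually.of_forall hθbound)
    have hRp₁ : (1 + ‖ξ₁‖) ^ p ≤ R ^ p := by
      refine Real.rpow_le_rpow (by positivity) ?_ hp0.le
      have := norm_nonneg ξ₂; simp only [hRdef]; linarith
    have hRp₂ : (1 + ‖ξ₂‖) ^ p ≤ R ^ p := by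
      refine Real.rpow_le_rpow (by positivity) ?_ hp0.le
      have := norm_nonneg ξ₁; simp only [hRdef]; linarith
    have h2p0 : (0:ℝ) < 2 ^ p := Real.rpow_pos_of_pos (by norm_num) _
    calc Pθ ≤ ∫ z, 2 ^ p * ((1 + ‖w₁ z‖) ^ p + (1 + ‖w₂ z‖) ^ p) ∂μ := step1
      _ = 2 ^ p * ((∫ z, (1 + ‖w₁ z‖) ^ p ∂μ) + ∫ z, (1 + ‖w₂ z‖) ^ p ∂μ) := by
          rw [integral_const_mul, integral_add hω₁p hω₂p]
      _ ≤ 2 ^ p * (CE * m * R ^ p + CE * m * R ^ p) := by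
          refine mul_le_mul_of_nonneg_left ?_ h2p0.le
          have b1 : (∫ z, (1 + ‖w₁ z‖) ^ p ∂μ) ≤ CE * m * R ^ p :=
            le_trans hE₁ (by
              refine mul_le_mul_of_nonneg_left hRp₁ (by positivity))
          have b2 : (∫ z, (1 + ‖w₂ z‖) ^ p ∂μ) ≤ CE * m * R ^ p :=
            le_trans hE₂ (by
              refine mul_le_mul_of_nonneg_left hRp₂ (by positivity))
          linarith
      _ = 2 ^ (p+1) * CE * m * R ^ p := by
          rw [Real.rpow_add (by norm_num : (0:ℝ) < 2), Real.rpow_one]; ring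
  -- integrability of θ^e for e ≤ p
  have hθe_int : ∀ e : ℝ, e ≤ p → Integrable (fun z => θ z ^ e) μ := by
    intro e he
    refine hθp_int.mono' (aemeas_rpow_of_pos hθm hθpos e).aestronglyMeasurable
      (Filter.Eventually.of_forall fun z => ?_)
    show ‖θ z ^ e‖ ≤ θ z ^ p
    rw [Real.norm_of_nonneg (Real.rpow_nonneg (hθpos z).le _)]
    exact Real.rpow_le_rpow_of_exponent_le (hθ1 z) he
  -- S
  set S : ℝ := ∫ z, θ z ^ (p-β) * δ z ^ β ∂μ with hSdef
  have hSptle : ∀ z, θ z ^ (p-β) * δ z ^ β ≤ θ z ^ p := by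
    intro z
    calc θ z ^ (p-β) * δ z ^ β ≤ θ z ^ (p-β) * θ z ^ β := by
          refine mul_le_mul_of_nonneg_left ?_ (Real.rpow_nonneg (hθpos z).le _)
          exact Real.rpow_le_rpow (hδ0 z) (hδθ z) (by linarith)
      _ = θ z ^ p := by rw [← Real.rpow_add (hθpos z)]; ring_nf
  have hSint : Integrable (fun z => θ z ^ (p-β) * δ z ^ β) μ := by
    refine hθp_int.mono' ((aemeas_rpow_of_pos hθm hθpos (p-β)).mul
      (aemeas_rpow_of_nonneg hδm (by linarith : (0:ℝ) ≤ β))).aestronglyMeasurable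
      (Filter.Eventually.of_forall fun z => ?_)
    show ‖θ z ^ (p-β) * δ z ^ β‖ ≤ θ z ^ p
    rw [Real.norm_of_nonneg (mul_nonneg (Real.rpow_nonneg (hθpos z).le _)
      (Real.rpow_nonneg (hδ0 z) _))]
    exact hSptle z
  have hS0 : 0 ≤ S := integral_nonneg fun z =>
    mul_nonneg (Real.rpow_nonneg (hθpos z).le _) (Real.rpow_nonneg (hδ0 z) _)
  -- D
  have hinner_expand : (fun z => ⟪A₁ z - A₂ z, w₁ z - w₂ z⟫) =
      fun z => ⟪A₁ z, w₁ z⟫ - ⟪A₁ z, w₂ z⟫ - ⟪A₂ z, w₁ z⟫ + ⟪A₂ z, w₂ z⟫ := by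
    funext z
    rw [inner_sub_left, inner_sub_right, inner_sub_right]
    ring
  have hDint : Integrable (fun z => ⟪A₁ z - A₂ z, w₁ z - w₂ z⟫) μ := by
    rw [hinner_expand]
    exact ((hAw11.sub hAw12).sub hAw21).add hAw22
  set I₁ : E := ∫ z, A₁ z ∂μ with hI₁def
  set I₂ : E := ∫ z, A₂ z ∂μ with hI₂def
  set B : ℝ := ‖I₁ - I₂‖ with hBdef
  have hB0 : 0 ≤ B := norm_nonneg _
  have hi3 : Integrable (fun z => ⟪A₁ z, w₁ z⟫ - ⟪A₁ z, w₂ z⟫) μ := hAw11.sub hAw12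
  have hi4 : Integrable (fun z => ⟪A₁ z, w₁ z⟫ - ⟪A₁ z, w₂ z⟫ - ⟪A₂ z, w₁ z⟫) μ :=
    hi3.sub hAw21
  have hD : (∫ z, ⟪A₁ z - A₂ z, w₁ z - w₂ z⟫ ∂μ) = ⟪I₁ - I₂, ξ₁ - ξ₂⟫ := by
    rw [hinner_expand, integral_add hi4 hAw22,
      integral_sub hi3 hAw21, integral_sub hAw11 hAw12,
      hkey11, hkey12, hkey21, hkey22, inner_sub_left, inner_sub_right, inner_sub_right]
    ring
  have hSD : c₂ * S ≤ B * G := by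
    have h1 : c₂ * S ≤ ∫ z, ⟪A₁ z - A₂ z, w₁ z - w₂ z⟫ ∂μ := by
      rw [hSdef, ← integral_const_mul]
      exact integral_mono_ae (hSint.const_mul c₂) hDint hmono12
    have h2 : ⟪I₁ - I₂, ξ₁ - ξ₂⟫ ≤ B * G := by
      calc ⟪I₁ - I₂, ξ₁ - ξ₂⟫ ≤ ‖I₁ - I₂‖ * ‖ξ₁ - ξ₂‖ := real_inner_le_norm _ _
        _ = B * G := rfl
    rw [hD] at h1
    linarith
  -- T
  set T : ℝ := ∫ z, θ z ^ (p-1-α) * δ z ^ α ∂μ with hTdef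
  have hTptle : ∀ z, θ z ^ (p-1-α) * δ z ^ α ≤ θ z ^ p := by
    intro z
    calc θ z ^ (p-1-α) * δ z ^ α ≤ θ z ^ (p-1-α) * θ z ^ α := by
          refine mul_le_mul_of_nonneg_left ?_ (Real.rpow_nonneg (hθpos z).le _)
          exact Real.rpow_le_rpow (hδ0 z) (hδθ z) hα0.le
      _ = θ z ^ (p-1) := by rw [← Real.rpow_add (hθpos z)]; ring_nf
      _ ≤ θ z ^ p := Real.rpow_le_rpow_of_exponent_le (hθ1 z) (by linarith)
  have hTint : Integrable (fun z => θ z ^ (p-1-α) * δ z ^ α) μ := by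
    refine hθp_int.mono' ((aemeas_rpow_of_pos hθm hθpos (p-1-α)).mul
      (aemeas_rpow_of_nonneg hδm hα0.le)).aestronglyMeasurable
      (Filter.Eventually.of_forall fun z => ?_)
    show ‖θ z ^ (p-1-α) * δ z ^ α‖ ≤ θ z ^ p
    rw [Real.norm_of_nonneg (mul_nonneg (Real.rpow_nonneg (hθpos z).le _)
      (Real.rpow_nonneg (hδ0 z) _))]
    exact hTptle z
  have hT0 : 0 ≤ T := integral_nonneg fun z =>
    mul_nonneg (Real.rpow_nonneg (hθpos z).le _) (Real.rpow_nonneg (hδ0 z) _)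
  have hBT : B ≤ c₁ * T := by
    have e1 : I₁ - I₂ = ∫ z, (A₁ z - A₂ z) ∂μ := (integral_sub hA₁ hA₂).symm
    calc B = ‖∫ z, (A₁ z - A₂ z) ∂μ‖ := by rw [hBdef, e1]
      _ ≤ ∫ z, ‖A₁ z - A₂ z‖ ∂μ := norm_integral_le_integral_norm _
      _ ≤ ∫ z, c₁ * (θ z ^ (p-1-α) * δ z ^ α) ∂μ :=
          integral_mono_ae (hA₁.sub hA₂).norm (hTint.const_mul c₁) hgrow12
      _ = c₁ * T := by rw [integral_const_mul]
  -- Q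
  set Q : ℝ := ∫ z, θ z ^ q ∂μ with hQdef
  have hQ0 : 0 ≤ Q := integral_nonneg fun z => Real.rpow_nonneg (hθpos z).le _
  -- case m = 0
  rcases eq_or_lt_of_le hm0 with hmz | hmpos
  · have hμ0 : μ = 0 := by
      have : μ Set.univ = 0 := by
        have hfin : μ Set.univ ≠ ⊤ := (measure_lt_top μ _).ne
        have := hmz.symm
        rwa [hmdef, ENNReal.toReal_eq_zero_iff, or_iff_left hfin] at this
      exact Measure.measure_univ_eq_zero.mp this
    have hBz : B = 0 := by
      rw [hBdef, hI₁def, hI₂def, hμ0]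
      simp
    rw [hBz]
    have : (0:ℝ) ≤ c₁ ^ (β/(β-α)) * c₂ ^ (-γ) * (2 ^ (p+1) * CE) ^ (q/p) * m * R ^ q * G ^ γ := by
      refine mul_nonneg (mul_nonneg (mul_nonneg (mul_nonneg (mul_nonneg ?_ ?_) ?_) hm0) ?_) ?_
      · exact Real.rpow_nonneg hc₁.le _
      · exact Real.rpow_nonneg hc₂.le _
      · exact Real.rpow_nonneg (by positivity) _
      · exact Real.rpow_nonneg hR0.le _
      · exact Real.rpow_nonneg hG0 _
    exact this
  -- now m > 0
  have hQle : Q ≤ (2 ^ (p+1) * CE) ^ (q/p) * m * R ^ q := by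
    rcases eq_or_lt_of_le hq0 with hqz | hqpos
    · have hQm : Q = m := by
        rw [hQdef, ← hqz]
        simp only [Real.rpow_zero]
        rw [integral_const, smul_eq_mul, mul_one]
        rfl
      rw [hQm, ← hqz]
      simp only [Real.rpow_zero, mul_one, one_mul]
      rw [show (0:ℝ)/p = 0 by simp, Real.rpow_zero, one_mul]
    · have hr1 : 1 < p/q := (one_lt_div hqpos).mpr hqp
      have hpq0 : (0:ℝ) < p - q := by linarith
      have hconj : (p/q)⁻¹ + (p/(p-q))⁻¹ = 1 := by
        rw [inv_div, inv_div]; field_simp; ring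
      have hfr : Integrable (fun z => (θ z ^ q) ^ (p/q)) μ := by
        refine hθp_int.congr (Filter.Eventually.of_forall fun z => ?_)
        show θ z ^ p = (θ z ^ q) ^ (p/q)
        rw [← Real.rpow_mul (hθpos z).le]
        congr 1
        field_simp
      have hgs : Integrable (fun z => (1:ℝ) ^ (p/(p-q))) μ := by
        simp only [Real.one_rpow]
        exact integrable_const 1
      have h := holder_int hr1 hconj (fun z => Real.rpow_nonneg (hθpos z).le _)
        (fun _ => zero_le_one) (aemeas_rpow_of_pos hθm hθpos q) aemeasurable_const hfr hgs
      simp only [mul_one, Real.one_rpow, integral_const, smul_eq_mul] at h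
      have heq1 : (∫ z, (θ z ^ q) ^ (p/q) ∂μ) = Pθ := by
        rw [hPθdef]
        refine integral_congr_ae (Filter.Eventually.of_forall fun z => ?_)
        show (θ z ^ q) ^ (p/q) = θ z ^ p
        rw [← Real.rpow_mul (hθpos z).le]
        congr 1
        field_simp
      rw [heq1] at h
      have hone_div : 1/(p/q) = q/p := by rw [one_div, inv_div]
      rw [hone_div] at h
      calc Q ≤ Pθ ^ (q/p) * m ^ (1/(p/(p-q))) := h
        _ ≤ (2 ^ (p+1) * CE * m * R ^ p) ^ (q/p) * m ^ (1/(p/(p-q))) := by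
            refine mul_le_mul_of_nonneg_right (Real.rpow_le_rpow hPθ0 hPθ_le (by positivity))
              (Real.rpow_nonneg hm0 _)
        _ = (2 ^ (p+1) * CE) ^ (q/p) * m * R ^ q := by
            rw [show 2 ^ (p+1) * CE * m * R ^ p = (2 ^ (p+1) * CE) * (m * R ^ p) by ring,
              Real.mul_rpow (by positivity) (by positivity),
              Real.mul_rpow hm0 (Real.rpow_nonneg hR0.le _),
              ← Real.rpow_mul hR0.le, show 1/(p/(p-q)) = (p-q)/p by rw [one_div, inv_div]]
            have hmm : m ^ (q/p) * m ^ ((p-q)/p) = m := by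
              rw [← Real.rpow_add hmpos]
              have : q/p + (p-q)/p = 1 := by field_simp; ring
              rw [this, Real.rpow_one]
            have hRq : p * (q/p) = q := by field_simp
            rw [hRq]
            calc (2^(p+1)*CE)^(q/p) * (m^(q/p) * R^q) * m^((p-q)/p)
                = (2^(p+1)*CE)^(q/p) * R^q * (m^(q/p) * m^((p-q)/p)) := by ring
              _ = (2^(p+1)*CE)^(q/p) * m * R^q := by rw [hmm]; ring
  -- main Hölder: T ≤ S^(α/β) * Q^((β-α)/β)
  have hTS : T ≤ S ^ (α/β) * Q ^ ((β-α)/β) := by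
    have hr1 : 1 < β/α := (one_lt_div hα0).mpr hαβ
    have hconj : (β/α)⁻¹ + (β/(β-α))⁻¹ = 1 := by
      rw [inv_div, inv_div]; field_simp; ring
    have hfg : ∀ z, (θ z ^ ((p-β)*(α/β)) * δ z ^ α) * θ z ^ ((p-1-α) - (p-β)*(α/β))
        = θ z ^ (p-1-α) * δ z ^ α := by
      intro z
      have e : (p-β)*(α/β) + ((p-1-α) - (p-β)*(α/β)) = p-1-α := by ring
      calc (θ z ^ ((p-β)*(α/β)) * δ z ^ α) * θ z ^ ((p-1-α) - (p-β)*(α/β))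
          = (θ z ^ ((p-β)*(α/β)) * θ z ^ ((p-1-α) - (p-β)*(α/β))) * δ z ^ α := by ring
        _ = θ z ^ (p-1-α) * δ z ^ α := by rw [← Real.rpow_add (hθpos z), e]
    have hfr_eq : ∀ z, (θ z ^ ((p-β)*(α/β)) * δ z ^ α) ^ (β/α) = θ z ^ (p-β) * δ z ^ β := by
      intro z
      rw [Real.mul_rpow (Real.rpow_nonneg (hθpos z).le _) (Real.rpow_nonneg (hδ0 z) _),
        ← Real.rpow_mul (hθpos z).le, ← Real.rpow_mul (hδ0 z)]
      have e1 : (p-β)*(α/β)*(β/α) = p-β := by field_simp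
      have e2 : α*(β/α) = β := by field_simp
      rw [e1, e2]
    have hgs_eq : ∀ z, (θ z ^ ((p-1-α) - (p-β)*(α/β))) ^ (β/(β-α)) = θ z ^ q := by
      intro z
      rw [← Real.rpow_mul (hθpos z).le]
      congr 1
      rw [hqdef]
      field_simp
      ring
    have hfr : Integrable (fun z => (θ z ^ ((p-β)*(α/β)) * δ z ^ α) ^ (β/α)) μ :=
      hSint.congr (Filter.Eventually.of_forall fun z => (hfr_eq z).symm)
    have hgs : Integrable (fun z => (θ z ^ ((p-1-α) - (p-β)*(α/β))) ^ (β/(β-α))) μ :=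
      (hθe_int q hqp.le).congr (Filter.Eventually.of_forall fun z => (hgs_eq z).symm)
    have hfm : AEMeasurable (fun z => θ z ^ ((p-β)*(α/β)) * δ z ^ α) μ :=
      (aemeas_rpow_of_pos hθm hθpos _).mul (aemeas_rpow_of_nonneg hδm hα0.le)
    have h := holder_int hr1 hconj
      (fun z => mul_nonneg (Real.rpow_nonneg (hθpos z).le _) (Real.rpow_nonneg (hδ0 z) _))
      (fun z => Real.rpow_nonneg (hθpos z).le _)
      hfm (aemeas_rpow_of_pos hθm hθpos _) hfr hgs
    have hTeq : T = ∫ z, (θ z ^ ((p-β)*(α/β)) * δ z ^ α) * θ z ^ ((p-1-α) - (p-β)*(α/β)) ∂μ := by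
      rw [hTdef]
      exact (integral_congr_ae (Filter.Eventually.of_forall fun z => hfg z)).symm
    rw [hTeq]
    calc (∫ z, (θ z ^ ((p-β)*(α/β)) * δ z ^ α) * θ z ^ ((p-1-α) - (p-β)*(α/β)) ∂μ)
        ≤ (∫ z, (θ z ^ ((p-β)*(α/β)) * δ z ^ α) ^ (β/α) ∂μ) ^ (1/(β/α)) *
          (∫ z, (θ z ^ ((p-1-α) - (p-β)*(α/β))) ^ (β/(β-α)) ∂μ) ^ (1/(β/(β-α))) := h
      _ = S ^ (α/β) * Q ^ ((β-α)/β) := by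
          rw [integral_congr_ae (Filter.Eventually.of_forall hfr_eq),
            integral_congr_ae (Filter.Eventually.of_forall hgs_eq),
            show 1/(β/α) = α/β by rw [one_div, inv_div],
            show 1/(β/(β-α)) = (β-α)/β by rw [one_div, inv_div]]
  -- assembly
  set W : ℝ := (2 ^ (p+1) * CE) ^ (q/p) * m * R ^ q with hWdef
  have hW0 : 0 ≤ W := by
    refine mul_nonneg (mul_nonneg (Real.rpow_nonneg (by positivity) _) hm0)
      (Real.rpow_nonneg hR0.le _)
  have goal_eq : c₁ ^ (β/(β-α)) * c₂ ^ (-γ) * (2 ^ (p+1) * CE) ^ (q/p) * m * R ^ q * G ^ γ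
      = c₁ ^ (β/(β-α)) * c₂ ^ (-γ) * W * G ^ γ := by rw [hWdef]; ring
  show B ≤ c₁ ^ (β/(β-α)) * c₂ ^ (-γ) * (2 ^ (p+1) * CE) ^ (q/p) * m * R ^ q * G ^ γ
  rw [goal_eq]
  rcases eq_or_lt_of_le hB0 with hBz | hBpos
  · rw [← hBz]
    refine mul_nonneg (mul_nonneg (mul_nonneg (Real.rpow_nonneg hc₁.le _)
      (Real.rpow_nonneg hc₂.le _)) hW0) (Real.rpow_nonneg hG0 _)
  · -- B > 0
    have hS_le : S ≤ B * G / c₂ := by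
      rw [le_div_iff₀ hc₂]
      linarith [hSD]
    have step1 : B ≤ c₁ * ((B * G / c₂) ^ (α/β) * W ^ ((β-α)/β)) := by
      have t1 : S ^ (α/β) ≤ (B * G / c₂) ^ (α/β) :=
        Real.rpow_le_rpow hS0 hS_le (by positivity)
      have t2 : Q ^ ((β-α)/β) ≤ W ^ ((β-α)/β) :=
        Real.rpow_le_rpow hQ0 hQle (by positivity)
      calc B ≤ c₁ * T := hBT
        _ ≤ c₁ * (S ^ (α/β) * Q ^ ((β-α)/β)) := mul_le_mul_of_nonneg_left hTS hc₁.le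
        _ ≤ c₁ * ((B * G / c₂) ^ (α/β) * W ^ ((β-α)/β)) := by
            refine mul_le_mul_of_nonneg_left ?_ hc₁.le
            exact mul_le_mul t1 t2 (Real.rpow_nonneg hQ0 _)
              (Real.rpow_nonneg (by positivity) _)
    -- peel off B^(α/β)
    have hBsplit : (B * G / c₂) ^ (α/β) = B ^ (α/β) * (G / c₂) ^ (α/β) := by
      rw [show B * G / c₂ = B * (G / c₂) by ring,
        Real.mul_rpow hBpos.le (by positivity)]
    have hBab : B ^ (α/β) * B ^ ((β-α)/β) = B := by
      rw [← Real.rpow_add hBpos]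
      have : α/β + (β-α)/β = 1 := by field_simp; ring
      rw [this, Real.rpow_one]
    have step2 : B ^ ((β-α)/β) ≤ c₁ * ((G / c₂) ^ (α/β) * W ^ ((β-α)/β)) := by
      have h2 : B ^ (α/β) * B ^ ((β-α)/β)
          ≤ B ^ (α/β) * (c₁ * ((G / c₂) ^ (α/β) * W ^ ((β-α)/β))) := by
        calc B ^ (α/β) * B ^ ((β-α)/β) = B := hBab
          _ ≤ c₁ * ((B * G / c₂) ^ (α/β) * W ^ ((β-α)/β)) := step1
          _ = B ^ (α/β) * (c₁ * ((G / c₂) ^ (α/β) * W ^ ((β-α)/β))) := by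
              rw [hBsplit]; ring
      exact le_of_mul_le_mul_left h2 (Real.rpow_pos_of_pos hBpos _)
    -- raise to the power β/(β-α)
    have hν0 : (0:ℝ) ≤ β/(β-α) := by positivity
    have hexp1 : ((β-α)/β) * (β/(β-α)) = 1 := by field_simp
    have step3 : B ≤ (c₁ * ((G / c₂) ^ (α/β) * W ^ ((β-α)/β))) ^ (β/(β-α)) := by
      have h := Real.rpow_le_rpow (Real.rpow_nonneg hBpos.le _) step2 hν0
      rwa [← Real.rpow_mul hBpos.le, hexp1, Real.rpow_one] at h
    -- expand the RHS
    have hexp2 : (α/β) * (β/(β-α)) = γ := by rw [hγdef]; field_simp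
    have hrhs : (c₁ * ((G / c₂) ^ (α/β) * W ^ ((β-α)/β))) ^ (β/(β-α))
        = c₁ ^ (β/(β-α)) * ((G / c₂) ^ γ * W) := by
      rw [Real.mul_rpow hc₁.le (mul_nonneg (Real.rpow_nonneg (by positivity) _)
          (Real.rpow_nonneg hW0 _)),
        Real.mul_rpow (Real.rpow_nonneg (by positivity) _) (Real.rpow_nonneg hW0 _),
        ← Real.rpow_mul (by positivity : (0:ℝ) ≤ G / c₂), ← Real.rpow_mul hW0,
        hexp2, hexp1, Real.rpow_one]
    have hGc : (G / c₂) ^ γ = G ^ γ * c₂ ^ (-γ) := by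
      rw [Real.div_rpow hG0 hc₂.le, Real.rpow_neg hc₂.le, div_eq_mul_inv]
    calc B ≤ (c₁ * ((G / c₂) ^ (α/β) * W ^ ((β-α)/β))) ^ (β/(β-α)) := step3
      _ = c₁ ^ (β/(β-α)) * ((G / c₂) ^ γ * W) := hrhs
      _ = c₁ ^ (β/(β-α)) * c₂ ^ (-γ) * W * G ^ γ := by rw [hGc]; ring

end MainEst

/-- Hölder continuity of the homogenized operator (part (iii) of the
Proposition): with `Vᵢ` the cell-problem data at `ξᵢ` (mean zero, orthogonality
relations), `b(y, ξᵢ) = (1/|Z|) ∫_Z a(y, z, ξᵢ + Vᵢ(z)) dz` and `γ = α/(β − α)`,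
one has `|b(y,ξ₁) − b(y,ξ₂)| ≤ c (1 + |ξ₁| + |ξ₂|)^{p−1−γ} |ξ₁ − ξ₂|^γ` for a constant
`c` depending only on `c₁, c₂, p, α, β, |Z|`. -/
theorem homogenized_operator_holder_continuous
    {n : ℕ} (p : ℝ) (hp : 1 < p)
    (c₁ c₂ α β : ℝ) (hc₁ : 0 < c₁) (hc₂ : 0 < c₂)
    (hα0 : 0 < α) (hα : α ≤ min 1 (p - 1)) (hβ : max p 2 ≤ β)
    (l L : Fin n → ℝ) (hlL : ∀ i, l i < L i)
    (Z : Set (EuclideanSpace ℝ (Fin n)))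
    (hZ : Z = {x : EuclideanSpace ℝ (Fin n) | ∀ i, x i ∈ Set.Ioo (l i) (L i)}) :
    ∃ c : ℝ, 0 < c ∧
      ∀ (y : EuclideanSpace ℝ (Fin n))
        (a : EuclideanSpace ℝ (Fin n) → EuclideanSpace ℝ (Fin n) →
          EuclideanSpace ℝ (Fin n) → EuclideanSpace ℝ (Fin n)),
        (∀ᵐ z : EuclideanSpace ℝ (Fin n) ∂volume, a y z 0 = 0) →
        (∀ᵐ z : EuclideanSpace ℝ (Fin n) ∂volume,
          ∀ ξ₁ ξ₂ : EuclideanSpace ℝ (Fin n),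
            ‖a y z ξ₁ - a y z ξ₂‖ ≤
              c₁ * (1 + ‖ξ₁‖ + ‖ξ₂‖) ^ (p - 1 - α) * ‖ξ₁ - ξ₂‖ ^ α) →
        (∀ᵐ z : EuclideanSpace ℝ (Fin n) ∂volume,
          ∀ ξ₁ ξ₂ : EuclideanSpace ℝ (Fin n),
            ⟪a y z ξ₁ - a y z ξ₂, ξ₁ - ξ₂⟫ ≥
              c₂ * (1 + ‖ξ₁‖ + ‖ξ₂‖) ^ (p - β) * ‖ξ₁ - ξ₂‖ ^ β) →
        ∀ (ξ₁ ξ₂ : EuclideanSpace ℝ (Fin n))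
          (V₁ V₂ : EuclideanSpace ℝ (Fin n) → EuclideanSpace ℝ (Fin n)),
          MemLp V₁ (ENNReal.ofReal p) (volume.restrict Z) →
          MemLp V₂ (ENNReal.ofReal p) (volume.restrict Z) →
          -- mean value zero
          (∫ z in Z, V₁ z) = 0 →
          (∫ z in Z, V₂ z) = 0 →
          -- measurability of the composed coefficients
          AEStronglyMeasurable (fun z => a y z (ξ₁ + V₁ z)) (volume.restrict Z) →
          AEStronglyMeasurable (fun z => a y z (ξ₂ + V₂ z)) (volume.restrict Z) →
          -- orthogonality relations
          Integrable (fun z => ⟪a y z (ξ₁ + V₁ z), V₁ z⟫) (volume.restrict Z) →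
          Integrable (fun z => ⟪a y z (ξ₁ + V₁ z), V₂ z⟫) (volume.restrict Z) →
          Integrable (fun z => ⟪a y z (ξ₂ + V₂ z), V₁ z⟫) (volume.restrict Z) →
          Integrable (fun z => ⟪a y z (ξ₂ + V₂ z), V₂ z⟫) (volume.restrict Z) →
          (∫ z in Z, ⟪a y z (ξ₁ + V₁ z), V₁ z⟫) = 0 →
          (∫ z in Z, ⟪a y z (ξ₁ + V₁ z), V₂ z⟫) = 0 →
          (∫ z in Z, ⟪a y z (ξ₂ + V₂ z), V₁ z⟫) = 0 →
          (∫ z in Z, ⟪a y z (ξ₂ + V₂ z), V₂ z⟫) = 0 →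
          ‖((volume Z).toReal⁻¹ • ∫ z in Z, a y z (ξ₁ + V₁ z)) -
              (volume Z).toReal⁻¹ • ∫ z in Z, a y z (ξ₂ + V₂ z)‖ ≤
            c * (1 + ‖ξ₁‖ + ‖ξ₂‖) ^ (p - 1 - α / (β - α)) *
              ‖ξ₁ - ξ₂‖ ^ (α / (β - α)) := by
  classical
  -- parameter facts
  have hα1 : α ≤ 1 := le_trans hα (min_le_left _ _)
  have hαp : α ≤ p - 1 := le_trans hα (min_le_right _ _)
  have hβp : p ≤ β := le_trans (le_max_left _ _) hβ
  have hβ2 : (2:ℝ) ≤ β := le_trans (le_max_right _ _) hβ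
  have hp0 : (0:ℝ) < p := by linarith
  have hβα : (0:ℝ) < β - α := by linarith
  -- measure facts about Z
  have hmp : MeasurePreserving ((MeasurableEquiv.toLp 2 (Fin n → ℝ)).symm)
      (volume : Measure (EuclideanSpace ℝ (Fin n))) (volume : Measure (Fin n → ℝ)) :=
    EuclideanSpace.volume_preserving_symm_measurableEquiv_toLp (Fin n)
  have hpre : Z = ((MeasurableEquiv.toLp 2 (Fin n → ℝ)).symm) ⁻¹'
      (Set.univ.pi fun i => Set.Ioo (l i) (L i)) := by
    rw [hZ]; ext x; simp [Set.mem_pi]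
  have hmeasbox : MeasurableSet (Set.univ.pi fun i => Set.Ioo (l i) (L i)) :=
    MeasurableSet.univ_pi fun i => measurableSet_Ioo
  have hvol : volume Z = ∏ i, ENNReal.ofReal (L i - l i) := by
    rw [hpre, hmp.measure_preimage hmeasbox.nullMeasurableSet, volume_pi_pi]
    simp [Real.volume_Ioo]
  have hfin : volume Z ≠ ⊤ := by
    rw [hvol]; exact (ENNReal.prod_lt_top (fun i _ => ENNReal.ofReal_lt_top)).ne
  have hm0 : 0 < (volume Z).toReal := by
    rw [hvol]
    refine ENNReal.toReal_pos ?_ ?_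
    · refine (Finset.prod_ne_zero_iff (M₀ := ENNReal)).mpr fun i _ => ?_
      simp only [ne_eq, ENNReal.ofReal_eq_zero, not_le]
      linarith [hlL i]
    · exact (ENNReal.prod_lt_top (fun i _ => ENNReal.ofReal_lt_top)).ne
  haveI hfm : IsFiniteMeasure (volume.restrict Z) :=
    ⟨by rwa [Measure.restrict_apply_univ, lt_top_iff_ne_top]⟩
  -- the constant
  refine ⟨c₁ ^ (β/(β-α)) * c₂ ^ (-(α/(β-α))) *
    (2 ^ (p+1) * (4 + 2 * (c₁ * 2 ^ β / c₂)) ^ p) ^ ((((p-1)*β - p*α)/(β-α))/p), by positivity,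
    ?_⟩
  intro y a h0 hgr hmo ξ₁ ξ₂ V₁ V₂ hV₁ hV₂ _ _ hA₁m hA₂m hi11 hi12 hi21 hi22 ho11 ho12 ho21 ho22
  have h0' : ∀ᵐ z ∂(volume.restrict Z), a y z 0 = 0 := ae_restrict_of_ae h0
  have hgr' := ae_restrict_of_ae (s := Z) hgr
  have hmo' := ae_restrict_of_ae (s := Z) hmo
  have hw₁m : MemLp (fun z => ξ₁ + V₁ z) (ENNReal.ofReal p) (volume.restrict Z) :=
    (memLp_const ξ₁).add hV₁
  have hw₂m : MemLp (fun z => ξ₂ + V₂ z) (ENNReal.ofReal p) (volume.restrict Z) :=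
    (memLp_const ξ₂).add hV₂
  -- pointwise growth bounds
  have growth_single : ∀ (w : EuclideanSpace ℝ (Fin n)), ∀ᵐ z ∂(volume.restrict Z),
      ∀ v : EuclideanSpace ℝ (Fin n), v = w → True := by
    intro w; exact Filter.Eventually.of_forall fun z v _ => trivial
  have hgrow₁ : ∀ᵐ z ∂(volume.restrict Z),
      ‖a y z (ξ₁ + V₁ z)‖ ≤ c₁ * (1 + ‖ξ₁ + V₁ z‖) ^ (p - 1) := by
    filter_upwards [h0', hgr'] with z hz0 hzg
    have h := hzg (ξ₁ + V₁ z) 0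
    rw [hz0, sub_zero, norm_zero, add_zero, sub_zero] at h
    have hωpos : (0:ℝ) < 1 + ‖ξ₁ + V₁ z‖ := by positivity
    have h1 : ‖ξ₁ + V₁ z‖ ^ α ≤ (1 + ‖ξ₁ + V₁ z‖) ^ α :=
      Real.rpow_le_rpow (norm_nonneg _) (by linarith) hα0.le
    have h2 : (1 + ‖ξ₁ + V₁ z‖) ^ (p-1-α) * (1 + ‖ξ₁ + V₁ z‖) ^ α
        = (1 + ‖ξ₁ + V₁ z‖) ^ (p-1) := by
      rw [← Real.rpow_add hωpos]; ring_nf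
    calc ‖a y z (ξ₁ + V₁ z)‖
        ≤ c₁ * (1 + ‖ξ₁ + V₁ z‖) ^ (p-1-α) * ‖ξ₁ + V₁ z‖ ^ α := h
      _ ≤ c₁ * (1 + ‖ξ₁ + V₁ z‖) ^ (p-1-α) * (1 + ‖ξ₁ + V₁ z‖) ^ α :=
          mul_le_mul_of_nonneg_left h1 (by positivity)
      _ = c₁ * (1 + ‖ξ₁ + V₁ z‖) ^ (p-1) := by rw [mul_assoc, h2]
  have hgrow₂ : ∀ᵐ z ∂(volume.restrict Z),
      ‖a y z (ξ₂ + V₂ z)‖ ≤ c₁ * (1 + ‖ξ₂ + V₂ z‖) ^ (p - 1) := by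
    filter_upwards [h0', hgr'] with z hz0 hzg
    have h := hzg (ξ₂ + V₂ z) 0
    rw [hz0, sub_zero, norm_zero, add_zero, sub_zero] at h
    have hωpos : (0:ℝ) < 1 + ‖ξ₂ + V₂ z‖ := by positivity
    have h1 : ‖ξ₂ + V₂ z‖ ^ α ≤ (1 + ‖ξ₂ + V₂ z‖) ^ α :=
      Real.rpow_le_rpow (norm_nonneg _) (by linarith) hα0.le
    have h2 : (1 + ‖ξ₂ + V₂ z‖) ^ (p-1-α) * (1 + ‖ξ₂ + V₂ z‖) ^ α
        = (1 + ‖ξ₂ + V₂ z‖) ^ (p-1) := by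
      rw [← Real.rpow_add hωpos]; ring_nf
    calc ‖a y z (ξ₂ + V₂ z)‖
        ≤ c₁ * (1 + ‖ξ₂ + V₂ z‖) ^ (p-1-α) * ‖ξ₂ + V₂ z‖ ^ α := h
      _ ≤ c₁ * (1 + ‖ξ₂ + V₂ z‖) ^ (p-1-α) * (1 + ‖ξ₂ + V₂ z‖) ^ α :=
          mul_le_mul_of_nonneg_left h1 (by positivity)
      _ = c₁ * (1 + ‖ξ₂ + V₂ z‖) ^ (p-1) := by rw [mul_assoc, h2]
  have hgrow12 : ∀ᵐ z ∂(volume.restrict Z),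
      ‖a y z (ξ₁ + V₁ z) - a y z (ξ₂ + V₂ z)‖ ≤
        c₁ * ((1 + ‖ξ₁ + V₁ z‖ + ‖ξ₂ + V₂ z‖) ^ (p - 1 - α) *
          ‖(ξ₁ + V₁ z) - (ξ₂ + V₂ z)‖ ^ α) := by
    filter_upwards [hgr'] with z hzg
    have h := hzg (ξ₁ + V₁ z) (ξ₂ + V₂ z)
    rw [mul_assoc] at h
    exact h
  have hmono₁ : ∀ᵐ z ∂(volume.restrict Z),
      c₂ * ((1 + ‖ξ₁ + V₁ z‖) ^ (p - β) * ‖ξ₁ + V₁ z‖ ^ β) ≤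
        ⟪a y z (ξ₁ + V₁ z), ξ₁ + V₁ z⟫ := by
    filter_upwards [h0', hmo'] with z hz0 hzm
    have h := hzm (ξ₁ + V₁ z) 0
    rw [hz0, sub_zero, norm_zero, add_zero, sub_zero, mul_assoc] at h
    exact h
  have hmono₂ : ∀ᵐ z ∂(volume.restrict Z),
      c₂ * ((1 + ‖ξ₂ + V₂ z‖) ^ (p - β) * ‖ξ₂ + V₂ z‖ ^ β) ≤
        ⟪a y z (ξ₂ + V₂ z), ξ₂ + V₂ z⟫ := by
    filter_upwards [h0', hmo'] with z hz0 hzm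
    have h := hzm (ξ₂ + V₂ z) 0
    rw [hz0, sub_zero, norm_zero, add_zero, sub_zero, mul_assoc] at h
    exact h
  have hmono12 : ∀ᵐ z ∂(volume.restrict Z),
      c₂ * ((1 + ‖ξ₁ + V₁ z‖ + ‖ξ₂ + V₂ z‖) ^ (p - β) *
        ‖(ξ₁ + V₁ z) - (ξ₂ + V₂ z)‖ ^ β) ≤
        ⟪a y z (ξ₁ + V₁ z) - a y z (ξ₂ + V₂ z), (ξ₁ + V₁ z) - (ξ₂ + V₂ z)⟫ := by
    filter_upwards [hmo'] with z hzm
    have h := hzm (ξ₁ + V₁ z) (ξ₂ + V₂ z)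
    rw [mul_assoc] at h
    exact h
  -- integrability of the coefficients
  have hA₁ : Integrable (fun z => a y z (ξ₁ + V₁ z)) (volume.restrict Z) := by
    have hω₁e : Integrable (fun z => (1 + ‖ξ₁ + V₁ z‖) ^ (p-1)) (volume.restrict Z) :=
      int_one_add_rpow hp0 hw₁m (by linarith)
    exact (hω₁e.const_mul c₁).mono' hA₁m hgrow₁
  have hA₂ : Integrable (fun z => a y z (ξ₂ + V₂ z)) (volume.restrict Z) := by
    have hω₂e : Integrable (fun z => (1 + ‖ξ₂ + V₂ z‖) ^ (p-1)) (volume.restrict Z) :=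
      int_one_add_rpow hp0 hw₂m (by linarith)
    exact (hω₂e.const_mul c₁).mono' hA₂m hgrow₂
  -- inner products with w_j: integrability and key identities
  have hAw11 : Integrable (fun z => ⟪a y z (ξ₁ + V₁ z), ξ₁ + V₁ z⟫) (volume.restrict Z) :=
    ((hA₁.inner_const ξ₁).add hi11).congr
      (Filter.Eventually.of_forall fun z => (inner_add_right _ _ _).symm)
  have hAw12 : Integrable (fun z => ⟪a y z (ξ₁ + V₁ z), ξ₂ + V₂ z⟫) (volume.restrict Z) :=
    ((hA₁.inner_const ξ₂).add hi12).congr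
      (Filter.Eventually.of_forall fun z => (inner_add_right _ _ _).symm)
  have hAw21 : Integrable (fun z => ⟪a y z (ξ₂ + V₂ z), ξ₁ + V₁ z⟫) (volume.restrict Z) :=
    ((hA₂.inner_const ξ₁).add hi21).congr
      (Filter.Eventually.of_forall fun z => (inner_add_right _ _ _).symm)
  have hAw22 : Integrable (fun z => ⟪a y z (ξ₂ + V₂ z), ξ₂ + V₂ z⟫) (volume.restrict Z) :=
    ((hA₂.inner_const ξ₂).add hi22).congr
      (Filter.Eventually.of_forall fun z => (inner_add_right _ _ _).symm)
  have key : ∀ (A : EuclideanSpace ℝ (Fin n) → EuclideanSpace ℝ (Fin n))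
      (hA : Integrable A (volume.restrict Z)) (ξ : EuclideanSpace ℝ (Fin n))
      (V : EuclideanSpace ℝ (Fin n) → EuclideanSpace ℝ (Fin n))
      (hiAV : Integrable (fun z => ⟪A z, V z⟫) (volume.restrict Z))
      (hoAV : (∫ z in Z, ⟪A z, V z⟫) = 0),
      (∫ z in Z, ⟪A z, ξ + V z⟫) = ⟪∫ z in Z, A z, ξ⟫ := by
    intro A hA ξ V hiAV hoAV
    have e1 : (∫ z in Z, ⟪A z, ξ + V z⟫) = (∫ z in Z, ⟪A z, ξ⟫) + ∫ z in Z, ⟪A z, V z⟫ := by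
      rw [← integral_add (hA.inner_const ξ) hiAV]
      exact integral_congr_ae (Filter.Eventually.of_forall fun z => inner_add_right _ _ _)
    rw [e1, hoAV, add_zero]
    have e2 : (∫ z in Z, ⟪A z, ξ⟫) = ∫ z in Z, ⟪ξ, A z⟫ :=
      integral_congr_ae (Filter.Eventually.of_forall fun z => real_inner_comm _ _)
    rw [e2, integral_inner hA ξ, real_inner_comm]
  have hkey11 := key _ hA₁ ξ₁ V₁ hi11 ho11
  have hkey12 := key _ hA₁ ξ₂ V₂ hi12 ho12
  have hkey21 := key _ hA₂ ξ₁ V₁ hi21 ho21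
  have hkey22 := key _ hA₂ ξ₂ V₂ hi22 ho22
  -- apply the main estimate
  have hmain := main_est hp hc₁ hc₂ hα0 hα1 hαp hβp hβ2 hw₁m hw₂m hA₁ hA₂
    hgrow12 hgrow₁ hgrow₂ hmono12 hmono₁ hmono₂ hAw11 hAw12 hAw21 hAw22
    hkey11 hkey12 hkey21 hkey22
  rw [Measure.restrict_apply_univ] at hmain
  -- massage the goal
  set m : ℝ := (volume Z).toReal with hmdef
  set I₁ : EuclideanSpace ℝ (Fin n) := ∫ z in Z, a y z (ξ₁ + V₁ z) with hI₁def
  set I₂ : EuclideanSpace ℝ (Fin n) := ∫ z in Z, a y z (ξ₂ + V₂ z) with hI₂def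
  have hLHS : ‖m⁻¹ • I₁ - m⁻¹ • I₂‖ = m⁻¹ * ‖I₁ - I₂‖ := by
    rw [← smul_sub, norm_smul, Real.norm_eq_abs, abs_of_nonneg (inv_nonneg.mpr hm0.le)]
  rw [hLHS]
  have hqe : p - 1 - α / (β - α) = ((p-1)*β - p*α)/(β-α) := by
    field_simp
    ring
  rw [hqe]
  set ν : ℝ := β/(β-α)
  set γ : ℝ := α/(β-α)
  set q : ℝ := ((p-1)*β - p*α)/(β-α)
  set CQ : ℝ := (2 ^ (p+1) * (4 + 2 * (c₁ * 2 ^ β / c₂)) ^ p) ^ (q/p) with hCQdef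
  -- hmain : ‖I₁ - I₂‖ ≤ c₁^ν * c₂^(-γ) * CQ * m * R^q * G^γ
  have hfinal : m⁻¹ * ‖I₁ - I₂‖ ≤
      c₁ ^ ν * c₂ ^ (-γ) * CQ * ((1 + ‖ξ₁‖ + ‖ξ₂‖) ^ q * ‖ξ₁ - ξ₂‖ ^ γ) := by
    have h1 : m⁻¹ * ‖I₁ - I₂‖ ≤ m⁻¹ * (c₁ ^ ν * c₂ ^ (-γ) * CQ * m *
        (1 + ‖ξ₁‖ + ‖ξ₂‖) ^ q * ‖ξ₁ - ξ₂‖ ^ γ) :=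
      mul_le_mul_of_nonneg_left hmain (inv_nonneg.mpr hm0.le)
    calc m⁻¹ * ‖I₁ - I₂‖ ≤ m⁻¹ * (c₁ ^ ν * c₂ ^ (-γ) * CQ * m *
        (1 + ‖ξ₁‖ + ‖ξ₂‖) ^ q * ‖ξ₁ - ξ₂‖ ^ γ) := h1
      _ = c₁ ^ ν * c₂ ^ (-γ) * CQ * ((1 + ‖ξ₁‖ + ‖ξ₂‖) ^ q * ‖ξ₁ - ξ₂‖ ^ γ) := by
          field_simp
  calc m⁻¹ * ‖I₁ - I₂‖
      ≤ c₁ ^ ν * c₂ ^ (-γ) * CQ * ((1 + ‖ξ₁‖ + ‖ξ₂‖) ^ q * ‖ξ₁ - ξ₂‖ ^ γ) := hfinal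
    _ = c₁ ^ ν * c₂ ^ (-γ) * CQ * (1 + ‖ξ₁‖ + ‖ξ₂‖) ^ q * ‖ξ₁ - ξ₂‖ ^ γ := by ring
end
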